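/- arXiv:2411.11842 — 6 statements merged into one kernel-verified Lean document; each statement's English description precedes it below -/
import Mathlib

section
/- For all l, m, n ∈ ℕ there is a constant f(l,m,n) ∈ ℕ with the following property: for every set U with |U| ≥ f(l,m,n), every non-empty set F with |F| ≤ l, and every map Φ from the m-element subsets of U to F, there exist i ∈ F and an n-element subset Z of U such that Φ(X) = i for all m-element subsets X of Z. -/
open SimpleGraph

universe u v

/-- No edge of `G` joins `X` and `Y`. -/
def NoEdges {V : Type u} (G : SimpleGraph V) (X Y : Set V) : Prop :=
  ∀ ⦃x⦄, x ∈ X → ∀ ⦃y⦄, y ∈ Y → ¬ G.Adj x y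

/-- `X` and `Y` are anticomplete: disjoint with no edges between them. -/
def Anticomplete {V : Type u} (G : SimpleGraph V) (X Y : Set V) : Prop :=
  Disjoint X Y ∧ NoEdges G X Y

/-- A stable (independent) set. -/
def IsStableSet {V : Type u} (G : SimpleGraph V) (S : Set V) : Prop :=
  S.Pairwise fun x y => ¬ G.Adj x y

/-- Some edge of `G` joins `X` and `Y`. -/
def Touches {V : Type u} (G : SimpleGraph V) (X Y : Set V) : Prop :=
  ∃ x ∈ X, ∃ y ∈ Y, G.Adj x y

/-- `P` induces a (nonempty) path in `G`. -/
def IsInducedPath {V : Type u} (G : SimpleGraph V) (P : Set V) : Prop :=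
  ∃ n : ℕ, 0 < n ∧ Nonempty (G.induce P ≃g pathGraph n)

/-- A `μ`-model in `G`: pairwise disjoint connected induced subgraphs, pairwise joined. -/
def IsCompleteModel {V : Type u} (G : SimpleGraph V) {μ : ℕ} (C : Fin μ → Set V) : Prop :=
  (∀ i, (G.induce (C i)).Connected) ∧
  (Pairwise fun i j => Disjoint (C i) (C j)) ∧
  Pairwise fun i j => Touches G (C i) (C j)

/-- All branch sets are induced paths. -/
def IsLinearFamily {V : Type u} (G : SimpleGraph V) {μ : ℕ} (C : Fin μ → Set V) : Prop :=
  ∀ i, IsInducedPath G (C i)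

/-- A `(ρ,σ)`-model in `G`. -/
def IsBipModel {V : Type u} (G : SimpleGraph V) {ρ σ : ℕ}
    (A : Fin ρ → Set V) (B : Fin σ → Set V) : Prop :=
  (∀ i, (G.induce (A i)).Connected) ∧ (∀ j, (G.induce (B j)).Connected) ∧
  (Pairwise fun i j => Disjoint (A i) (A j)) ∧
  (Pairwise fun i j => Disjoint (B i) (B j)) ∧
  (∀ i j, Disjoint (A i) (B j)) ∧
  ∀ i j, Touches G (A i) (B j)

/-- The family `A` is pairwise anticomplete. -/
def FamilyInduced {V : Type u} (G : SimpleGraph V) {ρ : ℕ} (A : Fin ρ → Set V) : Prop :=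
  Pairwise fun i j => NoEdges G (A i) (A j)

/-- `H` is a minor of `G`, via a minor model. -/
def IsMinorOf {W : Type v} {V : Type u} (H : SimpleGraph W) (G : SimpleGraph V) : Prop :=
  ∃ φ : W → Set V,
    (∀ w, (G.induce (φ w)).Connected) ∧
    (Pairwise fun w w' => Disjoint (φ w) (φ w')) ∧
    ∀ ⦃w w'⦄, H.Adj w w' → Touches G (φ w) (φ w')

/-- `H` is an induced minor of `G`. -/
def IsInducedMinorOf {W : Type v} {V : Type u} (H : SimpleGraph W) (G : SimpleGraph V) : Prop :=
  ∃ φ : W → Set V,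
    (∀ w, (G.induce (φ w)).Connected) ∧
    (Pairwise fun w w' => Disjoint (φ w) (φ w')) ∧
    (∀ ⦃w w'⦄, H.Adj w w' → Touches G (φ w) (φ w')) ∧
    ∀ ⦃w w'⦄, w ≠ w' → ¬ H.Adj w w' → NoEdges G (φ w) (φ w')

/-- `G` has a tree decomposition of width at most `k`. -/
def TreewidthAtMost {V : Type u} (G : SimpleGraph V) (k : ℕ) : Prop :=
  ∃ (ι : Type u) (T : SimpleGraph ι) (bag : ι → Set V),
    T.IsTree ∧
    (∀ x : V, ∃ i, x ∈ bag i) ∧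
    (∀ ⦃x y⦄, G.Adj x y → ∃ i, x ∈ bag i ∧ y ∈ bag i) ∧
    (∀ x : V, (T.induce {i | x ∈ bag i}).Connected) ∧
    ∀ i, (bag i).Finite ∧ (bag i).ncard ≤ k + 1

/-- A subdivision model: `G` is obtained from `H` by replacing edges with
internally disjoint paths. -/
def IsSubdivisionModel {W : Type v} {V : Type u} (H : SimpleGraph W) (G : SimpleGraph V)
    (f : W → V) (P : ∀ ⦃a b : W⦄, H.Adj a b → G.Walk (f a) (f b)) : Prop :=
  Function.Injective f ∧
  (∀ ⦃a b⦄ (h : H.Adj a b), (P h).IsPath) ∧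
  (∀ ⦃a b⦄ (h : H.Adj a b), P h.symm = (P h).reverse) ∧
  (∀ ⦃a b⦄ (h : H.Adj a b) (x : V), x ∈ (P h).support → x ∈ Set.range f →
      x = f a ∨ x = f b) ∧
  (∀ ⦃a b⦄ (h : H.Adj a b) ⦃a' b'⦄ (h' : H.Adj a' b'), s(a, b) ≠ s(a', b') →
      ∀ x, x ∈ (P h).support → x ∈ (P h').support → x ∈ Set.range f) ∧
  (∀ x : V, x ∈ Set.range f ∨ ∃ a b, ∃ h : H.Adj a b, x ∈ (P h).support) ∧
  ∀ e ∈ G.edgeSet, ∃ a b, ∃ h : H.Adj a b, e ∈ (P h).edges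

/-- `G` is (isomorphic to) a subdivision of `H`. -/
def IsSubdivisionOf {W : Type v} {V : Type u} (H : SimpleGraph W) (G : SimpleGraph V) : Prop :=
  ∃ f P, IsSubdivisionModel H G f P

/-- `G` is a proper subdivision of `H`: every edge is subdivided at least once. -/
def IsProperSubdivisionOf {W : Type v} {V : Type u} (H : SimpleGraph W) (G : SimpleGraph V) : Prop :=
  ∃ f P, IsSubdivisionModel H G f P ∧ ∀ ⦃a b⦄ (h : H.Adj a b), 2 ≤ (P h).length

/-- The `r`-by-`r` wall (hexagonal grid / brick wall). -/
def wallGraph (r : ℕ) : SimpleGraph (Fin r × Fin (2 * r)) :=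
  SimpleGraph.fromRel fun p q =>
    (p.1 = q.1 ∧ p.2.val + 1 = q.2.val) ∨
    (p.2 = q.2 ∧ p.1.val + 1 = q.1.val ∧ (p.1.val + p.2.val) % 2 = 0)

/-- `R` is an induced path in `G` (as a walk). -/
def IsPathIn {V : Type u} (G : SimpleGraph V) {x y : V} (R : G.Walk x y) : Prop :=
  R.IsPath ∧ IsInducedPath G {z | z ∈ R.support}

/-- The interior of a walk from `x` to `y`. -/
def interiorSet {V : Type u} (G : SimpleGraph V) {x y : V} (R : G.Walk x y) : Set V :=
  {z | z ∈ R.support ∧ z ≠ x ∧ z ≠ y}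

/-- An `s`-constellation `(S, L)` in `G` (with `V(G) = S ∪ L`). -/
def IsConstellation {V : Type u} (G : SimpleGraph V) (S L : Set V) (s : ℕ) : Prop :=
  S ∪ L = Set.univ ∧ Disjoint S L ∧ IsInducedPath G L ∧ IsStableSet G S ∧
  S.Finite ∧ S.ncard = s ∧ ∀ x ∈ S, ∃ z ∈ L, G.Adj x z

/-- Ample: no two vertices of `S` have a common neighbor in `L`. -/
def IsAmple {V : Type u} (G : SimpleGraph V) (S L : Set V) : Prop :=
  ∀ ⦃x⦄, x ∈ S → ∀ ⦃y⦄, y ∈ S → x ≠ y → ∀ ⦃z⦄, z ∈ L → ¬ (G.Adj x z ∧ G.Adj y z)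

/-- Interrupted: an enumeration of `S` such that later vertices meet the interior of
every route between earlier vertices. -/
def IsInterrupted {V : Type u} (G : SimpleGraph V) (S L : Set V) (s : ℕ) : Prop :=
  ∃ x : Fin s → V, Function.Injective x ∧ Set.range x = S ∧
    ∀ ⦃i j k : Fin s⦄, i < j → j < k →
      ∀ (R : G.Walk (x i) (x j)), IsPathIn G R → interiorSet G R ⊆ L →
        ∃ z ∈ interiorSet G R, G.Adj (x k) z

/-- An `(s,l)`-constellation in `G` with stable set `S` (and `V(G) = S ∪ paths`). -/
def IsSLConstellation {V : Type u} (G : SimpleGraph V) (S : Set V) (s l : ℕ) : Prop :=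
  IsStableSet G S ∧ S.Finite ∧ S.ncard = s ∧
  Nat.card (G.induce Sᶜ).ConnectedComponent = l ∧
  (∀ C : (G.induce Sᶜ).ConnectedComponent, IsInducedPath G (Subtype.val '' C.supp)) ∧
  ∀ x ∈ S, ∀ C : (G.induce Sᶜ).ConnectedComponent, ∃ z ∈ Subtype.val '' C.supp, G.Adj x z

/-- A route of the constellation: an induced path with distinct ends in `S` and
interior outside `S`. -/
def IsRoute {V : Type u} (G : SimpleGraph V) (S : Set V) {x y : V} (R : G.Walk x y) : Prop :=
  x ∈ S ∧ y ∈ S ∧ x ≠ y ∧ IsPathIn G R ∧ interiorSet G R ⊆ Sᶜ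

/-- Ample `(s,l)`-constellation: no route of length at most `2`. -/
def IsSLAmple {V : Type u} (G : SimpleGraph V) (S : Set V) : Prop :=
  ∀ ⦃x y : V⦄ (R : G.Walk x y), IsRoute G S R → 2 < R.length

/-- `q`-zigzagged. -/
def IsZigzagged {V : Type u} (G : SimpleGraph V) (S : Set V) (q : ℕ) : Prop :=
  ∃ e : V → ℕ, Set.InjOn e S ∧
    ∀ ⦃x⦄, x ∈ S → ∀ ⦃y⦄, y ∈ S → e x < e y →
      ∀ (R : G.Walk x y), IsRoute G S R →
        ({z | z ∈ S ∧ e x < e z ∧ e z < e y ∧ ¬ ∃ w ∈ R.support, G.Adj z w}).ncard < q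

/-- A strong `(k,l)`-block `(B, Q)` in `G`. -/
def IsStrongBlock {V : Type u} (G : SimpleGraph V) (k l : ℕ) (B : Set V)
    (Q : (x : V) → (y : V) → Set (G.Walk x y)) : Prop :=
  B.Finite ∧ k ≤ B.ncard ∧
  (∀ x ∈ B, ∀ y ∈ B, x ≠ y →
    (∃ s : Finset (G.Walk x y), ↑s ⊆ Q x y ∧ l ≤ s.card) ∧
    (∀ W ∈ Q x y, IsPathIn G W) ∧
    (∀ W ∈ Q x y, ∀ W' ∈ Q x y, W ≠ W' →
      ∀ z, z ∈ SimpleGraph.Walk.support W → z ∈ SimpleGraph.Walk.support W' →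
        z = x ∨ z = y)) ∧
  ∀ x ∈ B, ∀ y ∈ B, x ≠ y → ∀ x' ∈ B, ∀ y' ∈ B, x' ≠ y' → s(x, y) ≠ s(x', y') →
    ∀ W ∈ Q x y, ∀ W' ∈ Q x' y',
      ∀ z, z ∈ SimpleGraph.Walk.support W → z ∈ SimpleGraph.Walk.support W' →
        z ∈ ({x, y} ∩ {x', y'} : Set V)

/-- A `(α,1)`-model with path side `B` is `A`-aligned. -/
def AAlignedSingle {V : Type u} (G : SimpleGraph V) {α : ℕ}
    (A : Fin α → Set V) (B : Set V) : Prop :=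
  ∃ (n : ℕ) (e : G.induce B ≃g pathGraph n) (l r : Fin α → ℕ),
    (∀ i, l i ≤ r i) ∧ (∀ i j, i < j → r i < l j) ∧
    ∀ i (x : B), (∃ a ∈ A i, G.Adj ↑x a) → l i ≤ (e x).val ∧ (e x).val ≤ r i

/-- Inner lemma: build a sequence `a 0, …, a (t-1)` together with colors `d j`
such that every `(m+1)`-set consisting of `a j` and `m` later elements gets color `d j`. -/
theorem ramsey_seq (l m : ℕ)
    (IH : ∀ k : ℕ, ∃ N : ℕ, ∀ {α : Type u} [DecidableEq α]
      (c : Finset α → Fin l) (S : Finset α), N ≤ S.card →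
      ∃ Z ⊆ S, Z.card = k ∧ ∃ i, ∀ X ⊆ Z, X.card = m → c X = i) :
    ∀ t : ℕ, ∃ N : ℕ, ∀ {α : Type u} [DecidableEq α]
      (c : Finset α → Fin l) (S : Finset α), N ≤ S.card →
      ∃ (a : Fin t → α) (d : Fin t → Fin l), Function.Injective a ∧ (∀ j, a j ∈ S) ∧
        ∀ (j : Fin t) (X : Finset α), X.card = m →
          (∀ x ∈ X, ∃ i, j < i ∧ x = a i) → c (insert (a j) X) = d j := by
  intro t
  induction t with
  | zero =>
    exact ⟨0, fun c S _ => ⟨Fin.elim0, Fin.elim0, fun i => i.elim0, fun i => i.elim0,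
      fun j => j.elim0⟩⟩
  | succ t iht =>
    obtain ⟨N, hN⟩ := iht
    obtain ⟨M, hM⟩ := IH N
    refine ⟨M + 1, ?_⟩
    intro α _ c S hS
    have hSne : S.Nonempty := Finset.card_pos.mp (by omega)
    obtain ⟨a0, ha0⟩ := hSne
    have hS' : M ≤ (S.erase a0).card := by
      rw [Finset.card_erase_of_mem ha0]; omega
    obtain ⟨Z, hZS, hZcard, i0, hZ⟩ := hM (fun X => c (insert a0 X)) (S.erase a0) hS'
    obtain ⟨a', d', hinj, hmem, hprop⟩ := hN c Z (le_of_eq hZcard.symm)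
    have ha'ne : ∀ i, a' i ≠ a0 := fun i =>
      Finset.ne_of_mem_erase (hZS (hmem i))
    refine ⟨Fin.cases a0 a', Fin.cases i0 d', ?_, ?_, ?_⟩
    · intro i j h
      induction i using Fin.cases with
      | zero =>
        induction j using Fin.cases with
        | zero => rfl
        | succ j => simp only [Fin.cases_zero, Fin.cases_succ] at h
                    exact absurd h.symm (ha'ne j)
      | succ i =>
        induction j using Fin.cases with
        | zero => simp only [Fin.cases_zero, Fin.cases_succ] at h
                  exact absurd h (ha'ne i)
        | succ j => simp only [Fin.cases_succ] at h
                    exact congrArg Fin.succ (hinj h)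
    · intro j
      induction j using Fin.cases with
      | zero => simpa using ha0
      | succ j => simpa using (Finset.erase_subset a0 S) (hZS (hmem j))
    · intro j X hXcard hXmem
      induction j using Fin.cases with
      | zero =>
        have hXZ : X ⊆ Z := by
          intro x hx
          obtain ⟨i, hi0, hxi⟩ := hXmem x hx
          have hine : i ≠ 0 := Fin.pos_iff_ne_zero.mp hi0
          obtain ⟨k, rfl⟩ := Fin.exists_succ_eq.mpr hine
          simp only [Fin.cases_succ] at hxi
          rw [hxi]; exact hmem k
        simpa using hZ X hXZ hXcard
      | succ j =>
        simp only [Fin.cases_succ]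
        refine hprop j X hXcard ?_
        intro x hx
        obtain ⟨i, hji, hxi⟩ := hXmem x hx
        have hine : i ≠ 0 := by
          intro h; rw [h] at hji; exact absurd hji (Fin.not_lt_zero _).elim
        obtain ⟨k, rfl⟩ := Fin.exists_succ_eq.mpr hine
        simp only [Fin.cases_succ] at hxi
        exact ⟨k, Fin.succ_lt_succ_iff.mp hji, hxi⟩

theorem ramsey_main (l : ℕ) (hl : 0 < l) (m : ℕ) : ∀ k : ℕ, ∃ N : ℕ,
    ∀ {α : Type u} [DecidableEq α] (c : Finset α → Fin l) (S : Finset α), N ≤ S.card →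
      ∃ Z ⊆ S, Z.card = k ∧ ∃ i, ∀ X ⊆ Z, X.card = m → c X = i := by
  induction m with
  | zero =>
    intro k
    refine ⟨k, ?_⟩
    intro α _ c S hS
    obtain ⟨Z, hZS, hZcard⟩ := S.exists_subset_card_eq hS
    refine ⟨Z, hZS, hZcard, c ∅, ?_⟩
    intro X _ hX
    rw [Finset.card_eq_zero.mp hX]
  | succ m IH =>
    intro k
    obtain ⟨N, hN⟩ := ramsey_seq l m IH (l * k + 1)
    refine ⟨N, ?_⟩
    intro α _ c S hS
    obtain ⟨a, d, hinj, hmem, hprop⟩ := hN c S hS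
    -- pigeonhole on colors d
    obtain ⟨i, _, hi⟩ := Finset.exists_le_card_fiber_of_mul_le_card_of_maps_to
      (f := d) (s := Finset.univ) (t := Finset.univ) (n := k)
      (fun a _ => Finset.mem_univ _) ⟨⟨0, hl⟩, Finset.mem_univ _⟩
      (by simp only [Finset.card_univ, Fintype.card_fin]; omega)
    obtain ⟨J0, hJ0, hJ0card⟩ := Finset.exists_subset_card_eq hi
    refine ⟨Finset.image a J0, ?_, ?_, i, ?_⟩
    · intro x hx
      obtain ⟨j, _, rfl⟩ := Finset.mem_image.mp hx
      exact hmem j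
    · rw [Finset.card_image_of_injective _ hinj, hJ0card]
    · intro X hXZ hXcard
      set I : Finset (Fin (l * k + 1)) := J0.filter (fun j => a j ∈ X) with hI
      have hIX : Finset.image a I = X := by
        apply Finset.Subset.antisymm
        · intro x hx
          obtain ⟨j, hj, rfl⟩ := Finset.mem_image.mp hx
          exact (Finset.mem_filter.mp hj).2
        · intro x hx
          obtain ⟨j, hj, rfl⟩ := Finset.mem_image.mp (hXZ hx)
          exact Finset.mem_image.mpr ⟨j, Finset.mem_filter.mpr ⟨hj, hx⟩, rfl⟩
      have hIcard : I.card = m + 1 := by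
        rw [← hXcard, ← hIX, Finset.card_image_of_injective _ hinj]
      have hIne : I.Nonempty := Finset.card_pos.mp (by omega)
      set j0 := I.min' hIne with hj0
      have hj0I : j0 ∈ I := I.min'_mem hIne
      have hj0X : a j0 ∈ X := (Finset.mem_filter.mp hj0I).2
      have herase : X.erase (a j0) = Finset.image a (I.erase j0) := by
        rw [Finset.image_erase hinj, hIX]
      have hcolor : c (insert (a j0) (X.erase (a j0))) = d j0 := by
        apply hprop
        · rw [Finset.card_erase_of_mem hj0X, hXcard]; omega
        · intro x hx
          rw [herase] at hx
          obtain ⟨j, hj, rfl⟩ := Finset.mem_image.mp hx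
          obtain ⟨hjne, hjI⟩ := Finset.mem_erase.mp hj
          exact ⟨j, lt_of_le_of_ne (I.min'_le j hjI) (Ne.symm hjne), rfl⟩
      rw [Finset.insert_erase hj0X] at hcolor
      rw [hcolor]
      have := Finset.mem_filter.mp (hJ0 (Finset.mem_filter.mp hj0I).1)
      exact this.2


theorem stmt_3 (l m n : ℕ) (hl : 1 ≤ l) (hm : 1 ≤ m) (hn : 1 ≤ n) :
    ∃ f : ℕ, ∀ (α : Type u) (β : Type v) (U : Finset α) (F : Finset β)
      (Φ : Finset α → β),
      f ≤ U.card → F.Nonempty → F.card ≤ l →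
      (∀ X ⊆ U, X.card = m → Φ X ∈ F) →
      ∃ i ∈ F, ∃ Z ⊆ U, Z.card = n ∧ ∀ X ⊆ Z, X.card = m → Φ X = i := by
  classical
  obtain ⟨N, hN⟩ := ramsey_main.{u} l (by omega) m n
  refine ⟨max N n, ?_⟩
  intro α β U F Φ hU hFne hFl hΦ
  set e := F.equivFin with he
  set g : β → Fin l := fun b =>
    if h : b ∈ F then Fin.castLE hFl (e ⟨b, h⟩) else ⟨0, by omega⟩ with hg
  have hginj : ∀ b ∈ F, ∀ b' ∈ F, g b = g b' → b = b' := by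
    intro b hb b' hb' hgb
    simp only [hg, dif_pos hb, dif_pos hb'] at hgb
    have := e.injective (Fin.castLE_injective hFl hgb)
    exact congrArg Subtype.val this
  obtain ⟨Z, hZU, hZcard, i, hhom⟩ :=
    hN (fun X => g (Φ X)) U (le_trans (le_max_left _ _) hU)
  by_cases h : m ≤ n
  · obtain ⟨X0, hX0Z, hX0card⟩ := Z.exists_subset_card_eq (by omega : m ≤ Z.card)
    refine ⟨Φ X0, hΦ X0 (hX0Z.trans hZU) hX0card, Z, hZU, hZcard, ?_⟩
    intro X hXZ hX
    have h1 : g (Φ X) = g (Φ X0) := (hhom X hXZ hX).trans (hhom X0 hX0Z hX0card).symm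
    exact hginj _ (hΦ X (hXZ.trans hZU) hX) _ (hΦ X0 (hX0Z.trans hZU) hX0card) h1
  · obtain ⟨b0, hb0⟩ := hFne
    refine ⟨b0, hb0, Z, hZU, hZcard, ?_⟩
    intro X hXZ hX
    have := Finset.card_le_card hXZ
    omega
end

section
/- For all n, q, r ∈ ℕ there is a constant f(n,q,r) ∈ ℕ with the following property: for all sets U_1, …, U_n each of cardinality at least f(n,q,r), every non-empty set W with |W| ≤ r, and every map Φ : U_1 × ⋯ × U_n → W, there exist i ∈ W and q-element subsets Z_j ⊆ U_j for each j ∈ {1,…,n} such that Φ(z) = i for every z ∈ Z_1 × ⋯ × Z_n. -/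
open SimpleGraph

universe u v

theorem prodRamsey (q r : ℕ) : ∀ n : ℕ, ∃ f : ℕ,
    ∀ (α : Fin n → Type u) (U : ∀ j, Finset (α j)) (β : Type v)
      (F : Finset β) (Φ : (∀ j, α j) → β),
      (∀ j, f ≤ (U j).card) → F.Nonempty → F.card ≤ r →
      (∀ z : ∀ j, α j, (∀ j, z j ∈ U j) → Φ z ∈ F) →
      ∃ i ∈ F, ∃ Z : ∀ j, Finset (α j),
        (∀ j, Z j ⊆ U j ∧ (Z j).card = q) ∧
        ∀ z : ∀ j, α j, (∀ j, z j ∈ Z j) → Φ z = i := by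
  intro n
  induction n with
  | zero =>
    refine ⟨0, ?_⟩
    intro α U β F Φ hU hF hFr hΦ
    refine ⟨Φ (fun j => j.elim0), hΦ _ (fun j => j.elim0), fun j => j.elim0,
      fun j => j.elim0, ?_⟩
    intro z _
    have : z = fun j => j.elim0 := funext fun j => j.elim0
    rw [this]
  | succ n ih =>
    classical
    obtain ⟨f', hf'⟩ := ih
    rcases Nat.eq_zero_or_pos q with hq0 | hqpos
    · -- q = 0 case
      refine ⟨1, ?_⟩
      intro α U β F Φ hU hF hFr hΦ
      have hz : ∀ j, ∃ x, x ∈ U j := fun j =>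
        Finset.card_pos.mp (lt_of_lt_of_le one_pos (hU j))
      choose z hzmem using hz
      refine ⟨Φ z, hΦ z hzmem, fun _ => ∅, fun j => ⟨Finset.empty_subset _, by simp [hq0]⟩, ?_⟩
      intro z' hz'
      exact absurd (hz' 0) (Finset.notMem_empty _)
    refine ⟨max f' ((r ^ (f' ^ n)) * (q - 1) + 1), ?_⟩
    intro α U β F Φ hU hF hFr hΦ
    have hsub : ∀ j : Fin n, ∃ U' : Finset (α j.succ), U' ⊆ U j.succ ∧ U'.card = f' :=
      fun j => Finset.exists_subset_card_eq (le_trans (le_max_left _ _) (hU j.succ))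
    choose U' hU'sub hU'card using hsub
    -- the type of restricted colorings
    have hmemcons : ∀ (u : {u // u ∈ U 0}) (w : ∀ j : Fin n, {y // y ∈ U' j}),
        ∀ j, (Fin.cons u.val (fun j => (w j).val) : ∀ j, α j) j ∈ U j := by
      intro u w j
      refine Fin.cases ?_ ?_ j
      · simpa using u.property
      · intro k
        simpa using hU'sub k (w k).property
    set g : {u // u ∈ U 0} → ((∀ j : Fin n, {y // y ∈ U' j}) → {b // b ∈ F}) :=
      fun u w => ⟨Φ (Fin.cons u.val (fun j => (w j).val)), hΦ _ (hmemcons u w)⟩ with hg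
    have hcardDom : Fintype.card (∀ j : Fin n, {y // y ∈ U' j}) = f' ^ n := by
      rw [Fintype.card_pi]
      have : ∀ j : Fin n, Fintype.card {y // y ∈ U' j} = f' := fun j => by
        rw [Fintype.card_coe, hU'card]
      rw [Finset.prod_congr rfl fun j _ => this j]
      simp
    have hlt : Fintype.card ((∀ j : Fin n, {y // y ∈ U' j}) → {b // b ∈ F}) * (q - 1)
        < Fintype.card {u // u ∈ U 0} := by
      have h1 : Fintype.card ((∀ j : Fin n, {y // y ∈ U' j}) → {b // b ∈ F})
          ≤ r ^ (f' ^ n) := by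
        rw [Fintype.card_fun, hcardDom, Fintype.card_coe]
        exact Nat.pow_le_pow_left hFr _
      have h2 : (r ^ (f' ^ n)) * (q - 1) + 1 ≤ (U 0).card :=
        le_trans (le_max_right _ _) (hU 0)
      rw [Fintype.card_coe]
      calc Fintype.card ((∀ j : Fin n, {y // y ∈ U' j}) → {b // b ∈ F}) * (q - 1)
          ≤ (r ^ (f' ^ n)) * (q - 1) := Nat.mul_le_mul_right _ h1
        _ < (U 0).card := by omega
    obtain ⟨y, hy⟩ := Fintype.exists_lt_card_fiber_of_mul_lt_card g hlt
    have hq' : q ≤ (Finset.univ.filter fun u => g u = y).card := by omega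
    obtain ⟨Zs, hZs_sub, hZs_card⟩ := Finset.exists_subset_card_eq hq'
    have hZs_ne : Zs.Nonempty := Finset.card_pos.mp (by omega)
    obtain ⟨u₀, hu₀⟩ := hZs_ne
    have hkey : ∀ u ∈ Zs, g u = y := by
      intro u hu
      have := hZs_sub hu
      simpa using (Finset.mem_filter.mp this).2
    -- the induced coloring
    set Ψ : (∀ j : Fin n, α j.succ) → β := fun z => Φ (Fin.cons u₀.val z) with hΨ
    have hΨmem : ∀ z : ∀ j : Fin n, α j.succ, (∀ j, z j ∈ U' j) → Ψ z ∈ F := by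
      intro z hz
      refine hΦ _ ?_
      intro j
      refine Fin.cases ?_ ?_ j
      · simpa using u₀.property
      · intro k; simpa using hU'sub k (hz k)
    obtain ⟨i, hiF, Z', hZ'cond, hmono⟩ := hf' (fun j => α j.succ) U' β F Ψ
      (fun j => (hU'card j).ge) hF hFr hΨmem
    set Z₀ : Finset (α 0) := Zs.map (Function.Embedding.subtype _) with hZ₀
    refine ⟨i, hiF, Fin.cons Z₀ Z', ?_, ?_⟩
    · intro j
      refine Fin.cases ?_ ?_ j
      · constructor
        · simp only [Fin.cons_zero]
          intro x hx
          obtain ⟨a, _, ha⟩ := Finset.mem_map.mp hx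
          simpa [← ha] using a.property
        · simp [hZ₀, hZs_card]
      · intro k
        refine ⟨?_, ?_⟩
        · simp only [Fin.cons_succ]
          exact (hZ'cond k).1.trans (hU'sub k)
        · simp only [Fin.cons_succ]
          exact (hZ'cond k).2
    · intro z hz
      have hz0 : z 0 ∈ Z₀ := by simpa using hz 0
      have htail : ∀ j : Fin n, Fin.tail z j ∈ Z' j := by
        intro j
        simpa [Fin.tail] using hz j.succ
      obtain ⟨a, haZs, hav⟩ := Finset.mem_map.mp hz0
      set w : ∀ j : Fin n, {y // y ∈ U' j} :=
        fun j => ⟨Fin.tail z j, (hZ'cond j).1 (htail j)⟩ with hw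
      have hwv : (fun j => (w j).val) = Fin.tail z := rfl
      have hav' : a.val = z 0 := hav
      have hzeq : z = Fin.cons a.val (fun j => (w j).val) := by
        conv_lhs => rw [← Fin.cons_self_tail z]
        rw [hwv, hav']
      have e1 : Φ z = (g a w).val := by rw [hzeq]
      have e2 : (g u₀ w).val = Ψ (fun j => (w j).val) := by
        simp [hg, hΨ, hwv]
      rw [e1, hkey a haZs, ← hkey u₀ hu₀, e2]
      exact hmono _ htail

theorem stmt_4 (n q r : ℕ) (hn : 1 ≤ n) (hq : 1 ≤ q) (hr : 1 ≤ r) :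
    ∃ f : ℕ, ∀ (α : Fin n → Type u) (U : ∀ j, Finset (α j)) (β : Type v)
      (F : Finset β) (Φ : (∀ j, α j) → β),
      (∀ j, f ≤ (U j).card) → F.Nonempty → F.card ≤ r →
      (∀ z : ∀ j, α j, (∀ j, z j ∈ U j) → Φ z ∈ F) →
      ∃ i ∈ F, ∃ Z : ∀ j, Finset (α j),
        (∀ j, Z j ⊆ U j ∧ (Z j).card = q) ∧
        ∀ z : ∀ j, α j, (∀ j, z j ∈ Z j) → Φ z = i := prodRamsey q r n
end

section
/- Let s ∈ ℕ and let 𝔠 = (S, L) be an ample interrupted (2s+1)-constellation. Then 𝔠 has an induced minor isomorphic to K_{s,s}, and hence treewidth at least s. -/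
open SimpleGraph

universe u v

namespace StmtSix
open SimpleGraph
universe u'
variable {V : Type u} {G : SimpleGraph V}

/-- walk along a sequence of successively adjacent vertices -/
def seqWalk (G : SimpleGraph V) (f : ℕ → V) :
    (m : ℕ) → (h : ∀ i < m, G.Adj (f i) (f (i+1))) → G.Walk (f 0) (f m)
  | 0, _ => Walk.nil
  | (m+1), h => (seqWalk G f m (fun i hi => h i (by omega))).concat (h m (by omega))

lemma seqWalk_support (f : ℕ → V) (m : ℕ) (h : ∀ i < m, G.Adj (f i) (f (i+1))) :
    (seqWalk G f m h).support = (List.range (m+1)).map f := by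
  induction m with
  | zero => simp [seqWalk, List.range_succ]
  | succ m ih =>
    rw [seqWalk, Walk.support_concat, ih, List.range_succ (n := m + 1)]
    simp

lemma seqWalk_length (f : ℕ → V) (m : ℕ) (h : ∀ i < m, G.Adj (f i) (f (i+1))) :
    (seqWalk G f m h).length = m := by
  induction m with
  | zero => rfl
  | succ m ih => rw [seqWalk, Walk.length_concat, ih]

lemma seqWalk_mem_support (f : ℕ → V) (m : ℕ) (h : ∀ i < m, G.Adj (f i) (f (i+1))) {z : V} :
    z ∈ (seqWalk G f m h).support ↔ ∃ i ≤ m, f i = z := by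
  rw [seqWalk_support]
  simp only [List.mem_map, List.mem_range]
  constructor
  · rintro ⟨i, hi, rfl⟩; exact ⟨i, by omega, rfl⟩
  · rintro ⟨i, hi, rfl⟩; exact ⟨i, by omega, rfl⟩

lemma seqWalk_isPath (f : ℕ → V) (m : ℕ) (h : ∀ i < m, G.Adj (f i) (f (i+1)))
    (hinj : ∀ i ≤ m, ∀ j ≤ m, f i = f j → i = j) : (seqWalk G f m h).IsPath := by
  rw [Walk.isPath_def, seqWalk_support]
  refine List.Nodup.map_on ?_ List.nodup_range
  intro i hi j hj hij
  exact hinj i (by simpa using Nat.lt_succ_iff.mp (List.mem_range.mp hi))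
    j (by simpa using Nat.lt_succ_iff.mp (List.mem_range.mp hj)) hij

lemma inducedPath_of_seq (f : ℕ → V) (m : ℕ) (h : ∀ i < m, G.Adj (f i) (f (i+1)))
    (hinj : ∀ i ≤ m, ∀ j ≤ m, f i = f j → i = j)
    (hchord : ∀ i j, i < j → j ≤ m → G.Adj (f i) (f j) → j = i + 1) :
    IsInducedPath G {z | ∃ i ≤ m, f i = z} := by
  refine ⟨m + 1, Nat.succ_pos m, ⟨?_⟩⟩
  have hφbij : Function.Bijective
      (fun i : Fin (m+1) => (⟨f i.val, ⟨i.val, by omega, rfl⟩⟩ : {z | ∃ i ≤ m, f i = z})) := by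
    constructor
    · intro i j hij
      exact Fin.ext (hinj i.val (by omega) j.val (by omega) (congrArg Subtype.val hij))
    · rintro ⟨z, i, hi, rfl⟩
      exact ⟨⟨i, by omega⟩, rfl⟩
  have key : ∀ i j : Fin (m+1), G.Adj (f i.val) (f j.val) ↔ (pathGraph (m+1)).Adj i j := by
    intro i j
    rw [pathGraph_adj]
    constructor
    · intro hadj
      rcases lt_trichotomy i.val j.val with hlt | heq | hgt
      · left; exact (hchord i.val j.val hlt (by omega) hadj).symm
      · exact absurd (hinj i.val (by omega) j.val (by omega) (by rw [heq])) (by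
          intro hh; exact G.irrefl (by rwa [heq] at hadj))
      · right; exact (hchord j.val i.val hgt (by omega) hadj.symm).symm
    · rintro (hij | hij)
      · have := h i.val (by omega)
        rwa [hij] at this
      · have := h j.val (by omega)
        rw [hij] at this
        exact this.symm
  exact ((RelIso.mk (Equiv.ofBijective _ hφbij)
    (by intro i j; simpa [comap_adj, Equiv.ofBijective] using (key i j))).symm)

end StmtSix
namespace StmtSix
open SimpleGraph
variable {ι : Type u} {T : SimpleGraph ι}

/-- last element of a list satisfying a predicate -/
lemma exists_last_sat {α : Type*} (p : α → Prop) (l : List α) (hl : ∃ x ∈ l, p x) :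
    ∃ l1 m l2, l = l1 ++ m :: l2 ∧ p m ∧ ∀ z ∈ l2, ¬ p z := by
  classical
  induction l using List.reverseRecOn with
  | nil => simp at hl
  | append_singleton l' a ih =>
    by_cases hpa : p a
    · exact ⟨l', a, [], by simp, hpa, by simp⟩
    · obtain ⟨x, hx, hpx⟩ := hl
      have hx' : x ∈ l' := by
        rcases List.mem_append.mp hx with h | h
        · exact h
        · simp only [List.mem_singleton] at h; subst h; exact absurd hpx hpa
      obtain ⟨l1, m, l2, hdec, hpm, hl2⟩ := ih ⟨x, hx', hpx⟩
      exact ⟨l1, m, l2 ++ [a], by rw [hdec]; simp, hpm, by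
        intro z hz
        rcases List.mem_append.mp hz with h | h
        · exact hl2 z h
        · simp only [List.mem_singleton] at h; subst h; exact hpa⟩

/-- a set is "path closed" w.r.t. `T` -/
def PathClosed (T : SimpleGraph ι) (X : Set ι) : Prop :=
  ∀ ⦃a⦄, a ∈ X → ∀ ⦃b⦄, b ∈ X → ∀ (p : T.Walk a b), p.IsPath → ∀ z ∈ p.support, z ∈ X

lemma pathClosed_of_induce_connected (ht : T.IsTree) {X : Set ι}
    (hX : (T.induce X).Connected) : PathClosed T X := by
  classical
  intro a ha b hb p hp z hz
  obtain ⟨w⟩ := hX.preconnected ⟨a, ha⟩ ⟨b, hb⟩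
  let incl : T.induce X →g T := ⟨Subtype.val, fun hadj => hadj⟩
  have hw : p = (w.map incl).bypass := by
    exact (ht.existsUnique_path a b).unique hp (Walk.bypass_isPath _)
  have : z ∈ (w.map incl).support := Walk.support_bypass_subset _ (hw ▸ hz)
  rw [Walk.support_map] at this
  obtain ⟨⟨z', hz'⟩, _, rfl⟩ := List.mem_map.mp this
  exact hz'

lemma helly3 (ht : T.IsTree) {X Y Z : Set ι}
    (hX : PathClosed T X) (hY : PathClosed T Y) (hZ : PathClosed T Z)
    {a b c : ι} (haX : a ∈ X) (haY : a ∈ Y) (hbX : b ∈ X) (hbZ : b ∈ Z)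
    (hcY : c ∈ Y) (hcZ : c ∈ Z) : ∃ m, m ∈ X ∧ m ∈ Y ∧ m ∈ Z := by
  classical
  obtain ⟨p, hp, hpu⟩ := ht.existsUnique_path a b
  obtain ⟨r, hr, -⟩ := ht.existsUnique_path a c
  obtain ⟨l1, m, l2, hdec, hpm, hl2⟩ :=
    exists_last_sat (· ∈ r.support) p.support ⟨a, p.start_mem_support, r.start_mem_support⟩
  have hmp : m ∈ p.support := by rw [hdec]; simp
  have hnodup : p.support.Nodup := hp.support_nodup
  have hm_not_l1 : m ∉ l1 := by
    rw [hdec, List.nodup_append] at hnodup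
    exact fun h => hnodup.2.2 m h m (by simp) rfl
  set p1 := p.takeUntil m hmp with hp1
  set p2 := p.dropUntil m hmp with hp2
  have hspec : p1.append p2 = p := Walk.take_spec p hmp
  have hsupp : p1.support ++ p2.support.tail = p.support := by
    rw [← Walk.support_append, hspec]
  -- length bound
  have hlen : l1.length + 1 ≤ p1.support.length := by
    by_contra hle
    push_neg at hle
    have hpre1 : p1.support <+: p.support := ⟨p2.support.tail, hsupp⟩
    have hpre2 : l1 <+: p.support := ⟨m :: l2, hdec.symm⟩
    have : p1.support <+: l1 :=
      List.prefix_of_prefix_length_le hpre1 hpre2 (by omega)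
    exact hm_not_l1 (this.subset (Walk.end_mem_support p1))
  -- tail of p2 is inside l2
  have htail_sub : p2.support.tail ⊆ l2 := by
    have h1 : p2.support.tail = p.support.drop p1.support.length := by
      rw [← hsupp, List.drop_left]
    have h2 : l2 = p.support.drop (l1.length + 1) := by
      rw [hdec]
      have : l1 ++ m :: l2 = (l1 ++ [m]) ++ l2 := by simp
      rw [this]
      have := List.drop_left (l₁ := l1 ++ [m]) (l₂ := l2)
      simpa using this
    intro z hz
    rw [h1] at hz
    rw [h2]
    have : p.support.drop p1.support.length
        = (p.support.drop (l1.length + 1)).drop (p1.support.length - (l1.length + 1)) := by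
      rw [List.drop_drop]
      congr 1
      omega
    rw [this] at hz
    exact List.drop_subset _ _ hz
  have hp2_nopred : ∀ z ∈ p2.support, z ≠ m → z ∉ r.support := by
    intro z hz hzm
    have : z ∈ p2.support.tail := by
      rcases (by rw [Walk.support_eq_cons p2] at hz; exact hz : z ∈ m :: p2.support.tail) with h
      · simp only [List.mem_cons] at h; rcases h with h | h
        · exact absurd h hzm
        · exact h
    exact hl2 z (htail_sub this)
  -- build the path from b to c through m
  have hmr : m ∈ r.support := hpm
  set r2 := r.dropUntil m hmr with hr2
  have hr2path : r2.IsPath := hr.dropUntil hmr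
  have hp2path : p2.IsPath := hp.dropUntil hmp
  set q := p2.reverse.append r2 with hq
  have hqpath : q.IsPath := by
    rw [Walk.isPath_def, Walk.support_append, List.nodup_append]
    refine ⟨by rw [Walk.support_reverse]; exact List.nodup_reverse.mpr hp2path.support_nodup,
      hr2path.support_nodup.tail, ?_⟩
    intro z hz1 z' hz2 hzz'; subst hzz'
    have hz1' : z ∈ p2.support := by
      rw [Walk.support_reverse, List.mem_reverse] at hz1; exact hz1
    have hzm : z ≠ m := by
      intro h
      subst h
      have := hr2path.support_nodup
      rw [Walk.support_eq_cons r2] at this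
      exact (List.nodup_cons.mp this).1 hz2
    have : z ∈ r.support :=
      Walk.support_dropUntil_subset r hmr (by rw [Walk.support_eq_cons r2]; exact List.mem_cons_of_mem m hz2)
    exact hp2_nopred z hz1' hzm this
  have hmq : m ∈ q.support := by
    rw [hq, Walk.mem_support_append_iff]
    left
    rw [Walk.support_reverse, List.mem_reverse]
    exact Walk.start_mem_support p2
  exact ⟨m, hX haX hbX p hp m hmp, hY haY hcY r hr m hmr,
    hZ hbZ hcZ q hqpath m hmq⟩

lemma hellyN (ht : T.IsTree) : ∀ (n : ℕ) (C : Fin (n+1) → Set ι),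
    (∀ i, PathClosed T (C i)) → (∀ i j, (C i ∩ C j).Nonempty) → ∃ t, ∀ i, t ∈ C i := by
  intro n
  induction n with
  | zero =>
    intro C hpc hint
    obtain ⟨t, ht0, -⟩ := hint 0 0
    exact ⟨t, fun i => by have hi : i = 0 := Fin.ext (by omega); rw [hi]; exact ht0⟩
  | succ n ih =>
    intro C hpc hint
    set D : Fin (n+1) → Set ι := fun i => C i.castSucc ∩ C (Fin.last (n+1)) with hD
    have hDpc : ∀ i, PathClosed T (D i) := fun i a ha b hb p hp z hz =>
      ⟨hpc _ ha.1 hb.1 p hp z hz, hpc _ ha.2 hb.2 p hp z hz⟩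
    have hDint : ∀ i j, (D i ∩ D j).Nonempty := by
      intro i j
      obtain ⟨a, haX, haY⟩ := hint i.castSucc j.castSucc
      obtain ⟨b, hbX, hbZ⟩ := hint i.castSucc (Fin.last _)
      obtain ⟨c, hcY, hcZ⟩ := hint j.castSucc (Fin.last _)
      obtain ⟨m, h1, h2, h3⟩ := helly3 ht (hpc _) (hpc _) (hpc _) haX haY hbX hbZ hcY hcZ
      exact ⟨m, ⟨h1, h3⟩, ⟨h2, h3⟩⟩
    obtain ⟨t, hT⟩ := ih D hDpc hDint
    refine ⟨t, fun i => ?_⟩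
    induction i using Fin.lastCases with
    | last => exact (hT 0).2
    | cast j => exact (hT j).1

lemma reachable_induce_mono {X Y : Set ι} (hXY : X ⊆ Y)
    (a b : ↥X) (h : (T.induce X).Reachable a b) :
    (T.induce Y).Reachable ⟨a.1, hXY a.2⟩ ⟨b.1, hXY b.2⟩ := by
  obtain ⟨w⟩ := h
  let f : T.induce X →g T.induce Y := ⟨fun z => ⟨z.1, hXY z.2⟩, fun hadj => hadj⟩
  exact ⟨w.map f⟩

lemma no_small_treewidth {W : Type u} (G : SimpleGraph W) (s : ℕ) (hs : 1 ≤ s)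
    (C : Fin (s+1) → Set W)
    (hconn : ∀ i, (G.induce (C i)).Connected)
    (hdisj : ∀ i j, i ≠ j → Disjoint (C i) (C j))
    (htouch : ∀ i j, i ≠ j → Touches G (C i) (C j)) :
    ¬ TreewidthAtMost G (s-1) := by
  classical
  rintro ⟨κ, T, bag, htree, hcov, hedge, hbagconn, hsize⟩
  set D : Fin (s+1) → Set κ := fun i => {t | ∃ x ∈ C i, x ∈ bag t} with hD
  have key : ∀ (i : Fin (s+1)) (xx yy : ↥(C i)) (w : (G.induce (C i)).Walk xx yy)
      (t t' : κ) (htx : xx.val ∈ bag t) (hty : yy.val ∈ bag t'),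
      (T.induce (D i)).Reachable ⟨t, ⟨xx.val, xx.2, htx⟩⟩ ⟨t', ⟨yy.val, yy.2, hty⟩⟩ := by
    intro i xx yy w
    induction w with
    | @nil a =>
      intro t t' htx hty
      have hsub : {u' | a.val ∈ bag u'} ⊆ D i := fun u' hu' => ⟨a.val, a.2, hu'⟩
      exact reachable_induce_mono hsub ⟨t, htx⟩ ⟨t', hty⟩
        ((hbagconn a.val).preconnected ⟨t, htx⟩ ⟨t', hty⟩)
    | @cons a bb cc hadj w ih =>
      intro t t' htx hty
      obtain ⟨u, hu1, hu2⟩ := hedge hadj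
      have hsub : {u' | a.val ∈ bag u'} ⊆ D i := fun u' hu' => ⟨a.val, a.2, hu'⟩
      exact (reachable_induce_mono hsub ⟨t, htx⟩ ⟨u, hu1⟩
        ((hbagconn a.val).preconnected ⟨t, htx⟩ ⟨u, hu1⟩)).trans (ih u t' hu2 hty)
  have hDne : ∀ i, (D i).Nonempty := by
    intro i
    obtain ⟨⟨x, hx⟩⟩ := (hconn i).nonempty
    obtain ⟨t, htx⟩ := hcov x
    exact ⟨t, x, hx, htx⟩
  have hDconn : ∀ i, (T.induce (D i)).Connected := by
    intro i
    rw [connected_iff]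
    refine ⟨?_, (hDne i).to_subtype⟩
    rintro ⟨t, x, hx, htx⟩ ⟨t', y, hy, hty⟩
    obtain ⟨w⟩ := (hconn i).preconnected ⟨x, hx⟩ ⟨y, hy⟩
    exact key i ⟨x, hx⟩ ⟨y, hy⟩ w t t' htx hty
  have hDint : ∀ i j, (D i ∩ D j).Nonempty := by
    intro i j
    by_cases hij : i = j
    · subst hij
      obtain ⟨t, htmem⟩ := hDne i
      exact ⟨t, htmem, htmem⟩
    · obtain ⟨x, hx, y, hy, hadj⟩ := htouch i j hij
      obtain ⟨u, hu1, hu2⟩ := hedge hadj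
      exact ⟨u, ⟨x, hx, hu1⟩, ⟨y, hy, hu2⟩⟩
  obtain ⟨t, hT⟩ := hellyN htree s D
    (fun i => pathClosed_of_induce_connected htree (hDconn i)) hDint
  have hy : ∀ i : Fin (s+1), ∃ y, y ∈ C i ∧ y ∈ bag t := fun i => hT i
  choose y hy1 hy2 using hy
  have hinj : Set.InjOn y Set.univ := by
    intro i _ j _ hij
    by_contra hne
    exact Set.disjoint_left.mp (hdisj i j hne) (hy1 i) (hij ▸ hy1 j)
  have hcard : (Set.univ : Set (Fin (s+1))).ncard ≤ (bag t).ncard :=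
    Set.ncard_le_ncard_of_injOn y (fun i _ => hy2 i) hinj (hsize t).1
  rw [Set.ncard_univ] at hcard
  simp only [Nat.card_eq_fintype_card, Fintype.card_fin] at hcard
  have := (hsize t).2
  omega

end StmtSix
namespace StmtSix
open SimpleGraph
variable {V : Type u} {G : SimpleGraph V}

lemma connected_of_isInducedPath {P : Set V} (h : IsInducedPath G P) :
    (G.induce P).Connected := by
  obtain ⟨n, hn, ⟨e⟩⟩ := h
  rw [e.connected_iff]
  cases n with
  | zero => omega
  | succ n => exact pathGraph_connected n

lemma isPathIn_reverse {x y : V} {p : G.Walk x y} (h : IsPathIn G p) :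
    IsPathIn G p.reverse := by
  refine ⟨h.1.reverse, ?_⟩
  have hset : {z | z ∈ p.reverse.support} = {z | z ∈ p.support} := by
    ext z; simp [Walk.support_reverse]
  rw [hset]
  exact h.2

lemma interiorSet_reverse {x y : V} (p : G.Walk x y) :
    interiorSet G p.reverse = interiorSet G p := by
  ext z
  simp only [interiorSet, Walk.support_reverse, List.mem_reverse, Set.mem_setOf_eq]
  tauto

/-- Existence of an induced route between two "stars" attached at positions `p < p'`. -/
lemma route_exists {n : ℕ} (v : Fin n → V)
    (hvinj : Function.Injective v)
    (hvadj : ∀ r r' : Fin n, G.Adj (v r) (v r') ↔ (r.val + 1 = r'.val ∨ r'.val + 1 = r.val))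
    (u1 u2 : V) (hne : u1 ≠ u2) (hnadj : ¬ G.Adj u1 u2)
    (hu1L : ∀ r, v r ≠ u1) (hu2L : ∀ r, v r ≠ u2)
    (hcommon : ∀ r, ¬ (G.Adj u1 (v r) ∧ G.Adj u2 (v r)))
    (p p' : Fin n) (hpp : p < p') (hp1 : G.Adj u1 (v p)) (hp2 : G.Adj u2 (v p')) :
    ∃ (a b : Fin n), p ≤ a ∧ a < b ∧ b ≤ p' ∧ G.Adj u1 (v a) ∧ G.Adj u2 (v b) ∧
      ∃ (W : G.Walk u1 u2), IsPathIn G W ∧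
        interiorSet G W = {z | ∃ r : Fin n, a ≤ r ∧ r ≤ b ∧ z = v r} := by
  classical
  -- choose b minimal then a maximal
  set Bs : Finset (Fin n) := Finset.univ.filter (fun r => p ≤ r ∧ r ≤ p' ∧ G.Adj u2 (v r)) with hBs
  have hBne : Bs.Nonempty := ⟨p', Finset.mem_filter.mpr ⟨Finset.mem_univ _, le_of_lt hpp, le_refl _, hp2⟩⟩
  set b := Bs.min' hBne with hbdef
  obtain ⟨-, hpb, hbp', hbadj⟩ := Finset.mem_filter.mp (Bs.min'_mem hBne)
  have hbmin : ∀ r, p ≤ r → r ≤ p' → G.Adj u2 (v r) → b ≤ r := by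
    intro r h1 h2 h3
    exact Bs.min'_le r (Finset.mem_filter.mpr ⟨Finset.mem_univ _, h1, h2, h3⟩)
  have hpbstrict : p < b := by
    rcases lt_or_eq_of_le hpb with h | h
    · exact h
    · exact absurd ⟨hp1, h ▸ hbadj⟩ (hcommon p)
  set As : Finset (Fin n) := Finset.univ.filter (fun r => p ≤ r ∧ r < b ∧ G.Adj u1 (v r)) with hAs
  have hAne : As.Nonempty := ⟨p, Finset.mem_filter.mpr ⟨Finset.mem_univ _, le_refl _, hpbstrict, hp1⟩⟩
  set a := As.max' hAne with hadef
  obtain ⟨-, hpa, hab, haadj⟩ := Finset.mem_filter.mp (As.max'_mem hAne)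
  have hamax : ∀ r, p ≤ r → r < b → G.Adj u1 (v r) → r ≤ a := by
    intro r h1 h2 h3
    exact As.le_max' r (Finset.mem_filter.mpr ⟨Finset.mem_univ _, h1, h2, h3⟩)
  have hchord1 : ∀ r : Fin n, a < r → r ≤ b → ¬ G.Adj u1 (v r) := by
    intro r h1 h2 hadj
    rcases lt_or_eq_of_le h2 with h | h
    · exact absurd (hamax r (le_trans hpa (le_of_lt h1)) h hadj) (not_le.mpr h1)
    · exact hcommon b ⟨h ▸ hadj, hbadj⟩
  have hchord2 : ∀ r : Fin n, a ≤ r → r < b → ¬ G.Adj u2 (v r) := by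
    intro r h1 h2 hadj
    rcases lt_or_eq_of_le h1 with h | h
    · exact absurd (hbmin r (le_trans hpa h1) (le_trans (le_of_lt h2) hbp') hadj)
        (not_le.mpr h2)
    · exact hcommon a ⟨haadj, h ▸ hadj⟩
  -- the walk
  set m := (b.val - a.val) + 2 with hm
  have hm2 : 2 ≤ m := by omega
  have habv : a.val < b.val := hab
  set g : ℕ → Fin n := fun j => if h : a.val + j < n then ⟨a.val + j, h⟩ else b with hg
  have hgval : ∀ j, a.val + j ≤ b.val → (g j).val = a.val + j := by
    intro j hj
    rw [hg]
    have : a.val + j < n := lt_of_le_of_lt hj b.isLt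
    simp [this]
  set f : ℕ → V := fun i => if i = 0 then u1 else if i ≤ m - 1 then v (g (i-1)) else u2 with hf
  have hf0 : f 0 = u1 := by simp [hf]
  have hfm : f m = u2 := by simp [hf]; intro h; omega
  have hfmid : ∀ i, 1 ≤ i → i ≤ m - 1 → f i = v (g (i-1)) := by
    intro i h1 h2
    simp only [hf]
    rw [if_neg (by omega), if_pos h2]
  have hgmem : ∀ i, 1 ≤ i → i ≤ m - 1 → a.val ≤ (g (i-1)).val ∧ (g (i-1)).val ≤ b.val
      ∧ (g (i-1)).val = a.val + (i-1) := by
    intro i h1 h2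
    have := hgval (i-1) (by omega)
    omega
  have hadj : ∀ i < m, G.Adj (f i) (f (i+1)) := by
    intro i hi
    rcases Nat.eq_zero_or_pos i with rfl | hipos
    · rw [hf0, hfmid 1 le_rfl (by omega)]
      have : g 0 = a := Fin.ext (by rw [hgval 0 (by omega)]; omega)
      rw [this]
      exact haadj
    · rcases eq_or_lt_of_le (Nat.succ_le_of_lt hi) with h | h
      · -- i + 1 = m
        have hieq : i = m - 1 := by omega
        rw [hfmid i (by omega) (by omega), show i + 1 = m by omega, hfm]
        have : g (i-1) = b := Fin.ext (by rw [hgval (i-1) (by omega)]; omega)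
        rw [this]
        exact hbadj.symm
      · rw [hfmid i (by omega) (by omega), hfmid (i+1) (by omega) (by omega), Nat.add_sub_cancel]
        rw [hvadj]
        left
        have e1 := hgval (i-1) (by omega)
        have e2 := hgval i (by omega)
        omega
  have hinj : ∀ i ≤ m, ∀ j ≤ m, f i = f j → i = j := by
    have haux : ∀ i ≤ m, ∀ j ≤ m, i < j → f i ≠ f j := by
      intro i hi j hj hij
      rcases Nat.eq_zero_or_pos i with rfl | hipos
      · rcases eq_or_lt_of_le hj with rfl | hjm
        · rw [hf0, hfm]; exact hne
        · rw [hf0, hfmid j (by omega) (by omega)]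
          exact fun h => hu1L _ h.symm
      · rcases eq_or_lt_of_le hj with rfl | hjm
        · rw [hfmid i (by omega) (by omega), hfm]
          exact hu2L _
        · rw [hfmid i (by omega) (by omega), hfmid j (by omega) (by omega)]
          intro h
          have heq : g (i-1) = g (j-1) := hvinj h
          have h1 := (hgmem i (by omega) (by omega)).2.2
          have h2 := (hgmem j (by omega) (by omega)).2.2
          have heqv : ((g (i-1)) : ℕ) = ((g (j-1)) : ℕ) := by rw [heq]
          omega
    intro i hi j hj hij
    rcases lt_trichotomy i j with h | h | h
    · exact absurd hij (haux i hi j hj h)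
    · exact h
    · exact absurd hij.symm (haux j hj i hi h)
  have hchord : ∀ i j, i < j → j ≤ m → G.Adj (f i) (f j) → j = i + 1 := by
    intro i j hij hj hadjij
    by_contra hne'
    rcases Nat.eq_zero_or_pos i with rfl | hipos
    · rcases eq_or_lt_of_le hj with hjeq | hjm
      · rw [hf0, hjeq, hfm] at hadjij
        exact hnadj hadjij
      · -- 0 < j < m: Adj u1 (v (g (j-1)))
        rw [hf0, hfmid j (by omega) (by omega)] at hadjij
        have hj2 : 2 ≤ j := by omega
        obtain ⟨hga, hgb, hge⟩ := hgmem j (by omega) (by omega)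
        exact hchord1 (g (j-1)) (by omega : a.val < (g (j-1)).val)
          (by omega : (g (j-1)).val ≤ b.val) hadjij
    · rcases eq_or_lt_of_le hj with hjeq | hjm
      · -- j = m, 0 < i < m, i ≠ m - 1
        have him : i < m - 1 := by omega
        rw [hfmid i (by omega) (by omega), hjeq, hfm] at hadjij
        obtain ⟨hga, hgb, hge⟩ := hgmem i (by omega) (by omega)
        exact hchord2 (g (i-1)) (by omega : a.val ≤ (g (i-1)).val)
          (by omega : (g (i-1)).val < b.val) hadjij.symm
      · rw [hfmid i (by omega) (by omega), hfmid j (by omega) (by omega)] at hadjij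
        rw [hvadj] at hadjij
        obtain ⟨-, -, hge1⟩ := hgmem i (by omega) (by omega)
        obtain ⟨-, -, hge2⟩ := hgmem j (by omega) (by omega)
        omega
  refine ⟨a, b, hpa, hab, hbp', haadj, hbadj, (seqWalk G f m hadj).copy hf0 hfm, ⟨?_, ?_⟩, ?_⟩
  · rw [Walk.isPath_copy]
    exact seqWalk_isPath f m hadj hinj
  · have hset : {z | z ∈ ((seqWalk G f m hadj).copy hf0 hfm).support}
        = {z | ∃ i ≤ m, f i = z} := by
      ext z
      rw [Set.mem_setOf_eq, Walk.support_copy, seqWalk_mem_support]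
      rfl
    rw [hset]
    exact inducedPath_of_seq f m hadj hinj hchord
  · ext z
    simp only [interiorSet, Walk.support_copy, Set.mem_setOf_eq, seqWalk_mem_support]
    constructor
    · rintro ⟨⟨i, hi, rfl⟩, hz1, hz2⟩
      have hi0 : i ≠ 0 := fun h => hz1 (by rw [h, hf0])
      have him : i ≠ m := fun h => hz2 (by rw [h, hfm])
      obtain ⟨hga, hgb, -⟩ := hgmem i (by omega) (by omega)
      rw [hfmid i (by omega) (by omega)]
      exact ⟨g (i-1), hga, hgb, rfl⟩
    · rintro ⟨r, har, hrb, rfl⟩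
      have hval : a.val ≤ r.val ∧ r.val ≤ b.val := ⟨har, hrb⟩
      refine ⟨⟨r.val - a.val + 1, by omega, ?_⟩, fun h => hu1L r h, fun h => hu2L r h⟩
      rw [hfmid _ (by omega) (by omega)]
      congr 1
      exact Fin.ext (by rw [hgval _ (by omega)]; omega)
  
end StmtSix
namespace StmtSix
open SimpleGraph
variable {V : Type u} {G : SimpleGraph V}

lemma touches_mono {X X' Y Y' : Set V} (hX : X ⊆ X') (hY : Y ⊆ Y')
    (h : Touches G X Y) : Touches G X' Y' := by
  obtain ⟨a2, ha, b2, hb, hadj⟩ := h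
  exact ⟨a2, hX ha, b2, hY hb, hadj.symm.symm⟩

lemma touches_symm {X Y : Set V} (h : Touches G X Y) : Touches G Y X := by
  obtain ⟨xx, hx, yy, hy, hadj⟩ := h
  exact ⟨yy, hy, xx, hx, hadj.symm⟩

lemma singleton_induce_connected (y : V) : (G.induce ({y} : Set V)).Connected := by
  have hall : ∀ (u w : ({y} : Set V)), u = w := fun u w => Subtype.ext (u.2.trans w.2.symm)
  haveI : Nonempty ({y} : Set V) := ⟨⟨y, rfl⟩⟩
  exact ⟨fun u w => (hall u w) ▸ Reachable.refl u⟩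

lemma segment_inducedPath {n : ℕ} (v : Fin n → V) (hvinj : Function.Injective v)
    (hvadj : ∀ r r' : Fin n, G.Adj (v r) (v r') ↔ (r.val + 1 = r'.val ∨ r'.val + 1 = r.val))
    (a b : Fin n) (hab : a.val + 2 ≤ b.val) :
    IsInducedPath G {z | ∃ r : Fin n, a < r ∧ r < b ∧ z = v r} := by
  classical
  set m' := b.val - a.val - 2 with hm'
  set g : ℕ → Fin n := fun j => if h : a.val + 1 + j < n then ⟨a.val + 1 + j, h⟩ else b with hg
  have hgval : ∀ j ≤ m', (g j).val = a.val + 1 + j := by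
    intro j hj
    have hb := b.isLt
    have : a.val + 1 + j < n := by omega
    simp [hg, this]
  have hset : {z | ∃ i ≤ m', v (g i) = z} = {z | ∃ r : Fin n, a < r ∧ r < b ∧ z = v r} := by
    ext z
    simp only [Set.mem_setOf_eq]
    constructor
    · rintro ⟨i, hi, rfl⟩
      have := hgval i hi
      exact ⟨g i, by rw [Fin.lt_def]; omega, by rw [Fin.lt_def]; omega, rfl⟩
    · rintro ⟨r, h1, h2, rfl⟩
      rw [Fin.lt_def] at h1 h2
      refine ⟨r.val - a.val - 1, by omega, ?_⟩
      congr 1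
      exact Fin.ext (by rw [hgval _ (by omega)]; omega)
  rw [← hset]
  have hadj : ∀ i < m', G.Adj (v (g i)) (v (g (i+1))) := by
    intro i hi
    rw [hvadj]
    left
    rw [hgval i (by omega), hgval (i+1) (by omega)]
    omega
  exact inducedPath_of_seq _ m' hadj
    (fun i hi j hj hij => by
      have := hgval i hi
      have := hgval j hj
      have : (g i).val = (g j).val := by rw [hvinj hij]
      omega)
    (fun i j hij hj hadjij => by
      rw [hvadj] at hadjij
      have := hgval i (by omega)
      have := hgval j hj
      omega)

end StmtSix
theorem stmt_6 {V : Type u} [Fintype V] (G : SimpleGraph V) (s : ℕ) (hs : 1 ≤ s)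
    (S L : Set V) (hcon : IsConstellation G S L (2 * s + 1))
    (hamp : IsAmple G S L) (hint : IsInterrupted G S L (2 * s + 1)) :
    IsInducedMinorOf (completeBipartiteGraph (Fin s) (Fin s)) G ∧
      ¬ TreewidthAtMost G (s - 1) := by
  classical
  open StmtSix in
  obtain ⟨hunion, hSL, hLpath, hstab, hSfin, hScard, hnbr⟩ := hcon
  obtain ⟨n, hn, ⟨eL⟩⟩ := hLpath
  set v : Fin n → V := fun r => ((eL.symm r : ↥L) : V) with hv
  have hvL : ∀ r, v r ∈ L := fun r => (eL.symm r).2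
  have hvinj : Function.Injective v := fun r r' h =>
    eL.symm.injective (Subtype.ext h)
  have hvadj : ∀ r r' : Fin n, G.Adj (v r) (v r') ↔ (r.val + 1 = r'.val ∨ r'.val + 1 = r.val) := by
    intro r r'
    rw [← pathGraph_adj]
    have h1 : (G.induce L).Adj (eL.symm r) (eL.symm r') ↔ (pathGraph n).Adj r r' := by
      constructor
      · intro h
        have := eL.map_rel_iff.mpr h
        simpa using this
      · intro h
        exact eL.symm.map_rel_iff.mpr h
    rw [← h1]
    rfl
  have hvsurj : ∀ z ∈ L, ∃ r, v r = z := fun z hz => ⟨eL ⟨z, hz⟩, by simp [hv]⟩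
  obtain ⟨x, hxinj, hxrange, hintr⟩ := hint
  have hxS : ∀ k, x k ∈ S := fun k => hxrange ▸ Set.mem_range_self k
  have hxL : ∀ (k) (r : Fin n), v r ≠ x k := by
    intro k r h
    exact Set.disjoint_right.mp hSL (h ▸ hvL r) (hxS k)
  have hamp' : ∀ k k' : Fin (2*s+1), k ≠ k' → ∀ r : Fin n,
      ¬ (G.Adj (x k) (v r) ∧ G.Adj (x k') (v r)) :=
    fun k k' hkk r => hamp (hxS k) (hxS k') (fun h => hkk (hxinj h)) (hvL r)
  have hstab' : ∀ k k' : Fin (2*s+1), k ≠ k' → ¬ G.Adj (x k) (x k') :=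
    fun k k' hkk => hstab (hxS k) (hxS k') (fun h => hkk (hxinj h))
  have hnbx : ∀ k : Fin (2*s+1), ∃ r : Fin n, G.Adj (x k) (v r) := by
    intro k
    obtain ⟨z, hzL, hadj⟩ := hnbr (x k) (hxS k)
    obtain ⟨r, rfl⟩ := hvsurj z hzL
    exact ⟨r, hadj⟩
  choose nb hnb using hnbx
  set ι1 : Fin (s+1) → Fin (2*s+1) := fun t => ⟨t.val, by omega⟩ with hι1
  have hι1inj : Function.Injective ι1 := by
    intro t t' h
    apply Fin.ext
    have h2 : (ι1 t).val = (ι1 t').val := congrArg Fin.val h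
    simpa [hι1] using h2
  set π : Fin (s+1) → Fin n := fun t => nb (ι1 t) with hπdef
  have hπ : ∀ t, G.Adj (x (ι1 t)) (v (π t)) := fun t => hnb (ι1 t)
  have hπinj : Function.Injective π := by
    intro t t' h
    by_contra hne
    exact hamp' (ι1 t) (ι1 t') (fun hh => hne (hι1inj hh)) (π t) ⟨hπ t, by rw [h]; exact hπ t'⟩
  set σ := Tuple.sort π with hσ
  set q : Fin (s+1) → Fin n := π ∘ σ with hq
  have hqmono : StrictMono q :=
    (Tuple.monotone_sort π).strictMono_of_injective (hπinj.comp σ.injective)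
  set k1 : Fin s → Fin (2*s+1) := fun t => ι1 (σ t.castSucc) with hk1def
  set k2 : Fin s → Fin (2*s+1) := fun t => ι1 (σ t.succ) with hk2def
  have hk1s : ∀ t, (k1 t).val ≤ s := fun t => by
    have := (σ t.castSucc).isLt; simp [hk1def, hι1]; omega
  have hk2s : ∀ t, (k2 t).val ≤ s := fun t => by
    have := (σ t.succ).isLt; simp [hk2def, hι1]; omega
  have hk12 : ∀ t, k1 t ≠ k2 t := by
    intro t h
    exact absurd (σ.injective (hι1inj h)) (Fin.castSucc_lt_succ (i := t)).ne
  have hqlt : ∀ t : Fin s, q t.castSucc < q t.succ := fun t => hqmono (Fin.castSucc_lt_succ (i := t))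
  have hk1adj : ∀ t, G.Adj (x (k1 t)) (v (q t.castSucc)) := fun t => hπ (σ t.castSucc)
  have hk2adj : ∀ t, G.Adj (x (k2 t)) (v (q t.succ)) := fun t => hπ (σ t.succ)
  -- routes between consecutive attachment points
  have hroutes : ∀ t : Fin s, ∃ a b : Fin n,
      q t.castSucc ≤ a ∧ a < b ∧ b ≤ q t.succ ∧
      G.Adj (x (k1 t)) (v a) ∧ G.Adj (x (k2 t)) (v b) ∧
      ∀ k : Fin (2*s+1), s + 1 ≤ k.val →
        ∃ r : Fin n, a < r ∧ r < b ∧ G.Adj (x k) (v r) := by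
    intro t
    obtain ⟨a, b, h1, h2, h3, h4, h5, W, hWp, hWint⟩ :=
      route_exists (G := G) v hvinj hvadj (x (k1 t)) (x (k2 t))
        (fun h => hk12 t (hxinj h)) (hstab' _ _ (hk12 t))
        (fun r => hxL (k1 t) r) (fun r => hxL (k2 t) r)
        (fun r => hamp' (k1 t) (k2 t) (hk12 t) r)
        (q t.castSucc) (q t.succ) (hqlt t) (hk1adj t) (hk2adj t)
    refine ⟨a, b, h1, h2, h3, h4, h5, ?_⟩
    intro k hk
    have hintL : interiorSet G W ⊆ L := by
      rw [hWint]
      rintro z ⟨r, -, -, rfl⟩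
      exact hvL r
    have hlt1 : k1 t < k := by
      rw [Fin.lt_def]
      have := hk1s t
      omega
    have hlt2 : k2 t < k := by
      rw [Fin.lt_def]
      have := hk2s t
      omega
    have hget : ∀ z, z ∈ interiorSet G W → G.Adj (x k) z →
        ∃ r : Fin n, a < r ∧ r < b ∧ G.Adj (x k) (v r) := by
      intro z hz hadjz
      rw [hWint] at hz
      obtain ⟨r, h1r, h2r, rfl⟩ := hz
      have hra : r ≠ a := by
        rintro rfl
        exact hamp' k (k1 t) hlt1.ne' r ⟨hadjz, h4⟩
      have hrb : r ≠ b := by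
        rintro rfl
        exact hamp' k (k2 t) hlt2.ne' r ⟨hadjz, h5⟩
      exact ⟨r, lt_of_le_of_ne h1r (Ne.symm hra), lt_of_le_of_ne h2r hrb, hadjz⟩
    rcases lt_or_gt_of_ne (hk12 t) with hor | hor
    · obtain ⟨z, hz, hadjz⟩ := hintr hor hlt2 W hWp hintL
      exact hget z hz hadjz
    · obtain ⟨z, hz, hadjz⟩ := hintr hor hlt1 W.reverse (isPathIn_reverse hWp)
        (by rw [interiorSet_reverse]; exact hintL)
      rw [interiorSet_reverse] at hz
      exact hget z hz hadjz
  choose a b hab1 hab2 hab3 hab4 hab5 hhit using hroutes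
  set A : Fin s → Set V := fun t => {z | ∃ r : Fin n, a t < r ∧ r < b t ∧ z = v r} with hA
  set late : Fin s → Fin (2*s+1) := fun j => ⟨s+1+j.val, by omega⟩ with hlate
  have hlate_ge : ∀ j, s + 1 ≤ (late j).val := fun j => by simp [hlate]
  have hlate_inj : Function.Injective late := by
    intro j j' h
    have h2 : (late j).val = (late j').val := congrArg Fin.val h
    simp only [hlate] at h2
    exact Fin.ext (by omega)
  have habgap : ∀ t, (a t).val + 2 ≤ (b t).val := by
    intro t
    obtain ⟨r, h1, h2, -⟩ := hhit t (late ⟨0, hs⟩) (hlate_ge _)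
    rw [Fin.lt_def] at h1 h2
    omega
  have hAip : ∀ t, IsInducedPath G (A t) := fun t =>
    segment_inducedPath v hvinj hvadj (a t) (b t) (habgap t)
  have hAconn : ∀ t, (G.induce (A t)).Connected := fun t =>
    connected_of_isInducedPath (hAip t)
  have hAL : ∀ t, A t ⊆ L := by rintro t z ⟨r, -, -, rfl⟩; exact hvL r
  have hAne : ∀ t, (A t).Nonempty := by
    intro t
    obtain ⟨r, h1, h2, -⟩ := hhit t (late ⟨0, hs⟩) (hlate_ge _)
    exact ⟨v r, r, h1, h2, rfl⟩
  have hsep : ∀ t t' : Fin s, t < t' → (b t).val ≤ (a t').val := by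
    intro t t' h
    have h2 : q t.succ ≤ q t'.castSucc := by
      apply hqmono.monotone
      rw [Fin.le_def, Fin.val_succ, Fin.coe_castSucc]
      have := Fin.lt_def.mp h
      omega
    calc (b t).val ≤ (q t.succ).val := Fin.le_def.mp (hab3 t)
      _ ≤ (q t'.castSucc).val := Fin.le_def.mp h2
      _ ≤ (a t').val := Fin.le_def.mp (hab1 t')
  have hAdisj : ∀ t t' : Fin s, t ≠ t' → Disjoint (A t) (A t') := by
    intro t t' hne
    rw [Set.disjoint_left]
    rintro z ⟨r, h1, h2, rfl⟩ ⟨r', h1', h2', hzz⟩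
    have hrr : r = r' := hvinj hzz
    subst hrr
    rw [Fin.lt_def] at h1 h2 h1' h2'
    rcases lt_or_gt_of_ne hne with hor | hor
    · have := hsep t t' hor; omega
    · have := hsep t' t hor; omega
  have hAnoedge : ∀ t t' : Fin s, t ≠ t' → ∀ z ∈ A t, ∀ z' ∈ A t', ¬ G.Adj z z' := by
    rintro t t' hne z ⟨r, h1, h2, rfl⟩ z' ⟨r', h1', h2', rfl⟩ hadj
    rw [hvadj] at hadj
    rw [Fin.lt_def] at h1 h2 h1' h2'
    rcases lt_or_gt_of_ne hne with hor | hor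
    · have := hsep t t' hor; omega
    · have := hsep t' t hor; omega
  have hAxtouch : ∀ (t : Fin s) (j : Fin s), Touches G (A t) {x (late j)} := by
    intro t j
    obtain ⟨r, h1, h2, hadj⟩ := hhit t (late j) (hlate_ge j)
    exact ⟨v r, ⟨r, h1, h2, rfl⟩, x (late j), rfl, hadj.symm⟩
  have hxnotL : ∀ k : Fin (2*s+1), x k ∉ L := fun k h =>
    Set.disjoint_left.mp hSL (hxS k) h
  have dAx : ∀ (t : Fin s) (k : Fin (2*s+1)), Disjoint (A t) {x k} := by
    intro t k
    rw [Set.disjoint_singleton_right]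
    exact fun h => hxnotL k (hAL t h)
  have dxx : ∀ k k' : Fin (2*s+1), k ≠ k' → Disjoint ({x k} : Set V) {x k'} := by
    intro k k' h
    rw [Set.disjoint_singleton_left, Set.mem_singleton_iff]
    exact fun hh => h (hxinj hh)
  have dxxlate : ∀ u u' : Fin s, u.val ≠ u'.val → Disjoint ({x (late u)} : Set V) {x (late u')} :=
    fun u u' h => dxx _ _ (fun hh => h (congrArg Fin.val (hlate_inj hh)))
  have dAA : ∀ t t' : Fin s, t.val ≠ t'.val → Disjoint (A t) (A t') :=
    fun t t' h => hAdisj t t' (fun hh => h (congrArg Fin.val hh))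
  constructor
  · -- the induced minor
    refine ⟨Sum.elim A (fun j => {x (late j)}), ?_, ?_, ?_, ?_⟩
    · rintro (t | j)
      · exact hAconn t
      · exact singleton_induce_connected _
    · rintro (t | j) (t' | j') hne
      · exact dAA t t' (fun h => hne (by rw [Fin.ext h]))
      · exact dAx t (late j')
      · exact (dAx t' (late j)).symm
      · exact dxxlate j j' (fun h => hne (by rw [Fin.ext h]))
    · rintro (t | j) (t' | j') hadj
      · simp at hadj
      · exact hAxtouch t j'
      · exact touches_symm (hAxtouch t' j)
      · simp at hadj
    · rintro (t | j) (t' | j') hne hnadj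
      · exact fun z hz z' hz' hadj => hAnoedge t t'
          (fun h => hne (by rw [h])) z hz z' hz' hadj
      · exact absurd (by simp) hnadj
      · exact absurd (by simp) hnadj
      · intro z hz z' hz' hadj
        simp only [Sum.elim_inr] at hz hz'
        rw [Set.mem_singleton_iff] at hz hz'
        subst hz; subst hz'
        exact hstab' _ _ (fun h => hne (by rw [hlate_inj h])) hadj
  · -- treewidth
    have hs0 : (0 : ℕ) < s := hs
    set j0 : Fin s := ⟨0, hs0⟩ with hj0
    set tIdx : Fin (s+1) → Fin s := fun i => if h : i.val < s then ⟨i.val, h⟩ else j0 with htIdx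
    set Cs : Fin (s+1) → Set V := fun i =>
      if i.val < s then
        (if 1 ≤ i.val then A (tIdx i) ∪ {x (late (tIdx i))} else A (tIdx i))
      else {x (late j0)} with hCs
    have shape : ∀ i : Fin (s+1),
        (Cs i = A (tIdx i) ∪ {x (late (tIdx i))} ∧ 1 ≤ (tIdx i).val ∧ (tIdx i).val = i.val)
        ∨ (Cs i = A (tIdx i) ∧ (tIdx i).val = i.val ∧ i.val = 0)
        ∨ (Cs i = {x (late j0)} ∧ i.val = s) := by
      intro i
      by_cases h1 : i.val < s
      · have hval : (tIdx i).val = i.val := by rw [htIdx]; simp [h1]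
        by_cases h2 : 1 ≤ i.val
        · left
          refine ⟨?_, by omega, hval⟩
          rw [hCs]; dsimp only; rw [if_pos h1, if_pos h2]
        · right; left
          refine ⟨?_, hval, by omega⟩
          rw [hCs]; dsimp only; rw [if_pos h1, if_neg h2]
      · right; right
        refine ⟨?_, by have := i.isLt; omega⟩
        rw [hCs]; dsimp only; rw [if_neg h1]
    have hconn : ∀ i, (G.induce (Cs i)).Connected := by
      intro i
      rcases shape i with ⟨hEq, -, -⟩ | ⟨hEq, -, -⟩ | ⟨hEq, -⟩
      · rw [hEq]
        obtain ⟨r, hr1, hr2, hadj⟩ := hhit (tIdx i) (late (tIdx i)) (hlate_ge _)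
        rw [show A (tIdx i) ∪ {x (late (tIdx i))} = A (tIdx i) ∪ {v r, x (late (tIdx i))} by
          rw [Set.insert_eq, ← Set.union_assoc, Set.union_eq_self_of_subset_right
            (Set.singleton_subset_iff.mpr (show v r ∈ A (tIdx i) from ⟨r, hr1, hr2, rfl⟩))]]
        exact induce_union_connected (hAconn _).preconnected
          (induce_pair_connected_of_adj hadj.symm).preconnected ⟨v r, ⟨r, hr1, hr2, rfl⟩, by simp⟩
      · rw [hEq]; exact hAconn _
      · rw [hEq]; exact singleton_induce_connected _
    have hdisj : ∀ i j : Fin (s+1), i ≠ j → Disjoint (Cs i) (Cs j) := by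
      intro i j hij
      have hne' : i.val ≠ j.val := fun h => hij (Fin.ext h)
      rcases shape i with ⟨hEq1, hv1, hv1'⟩ | ⟨hEq1, hv1, hv1'⟩ | ⟨hEq1, hv1⟩ <;>
        rcases shape j with ⟨hEq2, hv2, hv2'⟩ | ⟨hEq2, hv2, hv2'⟩ | ⟨hEq2, hv2⟩ <;>
        rw [hEq1, hEq2]
      · exact Set.disjoint_union_left.mpr
          ⟨Set.disjoint_union_right.mpr ⟨dAA _ _ (by omega), dAx _ _⟩,
           Set.disjoint_union_right.mpr ⟨(dAx _ _).symm, dxxlate _ _ (by omega)⟩⟩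
      · exact Set.disjoint_union_left.mpr ⟨dAA _ _ (by omega), (dAx _ _).symm⟩
      · exact Set.disjoint_union_left.mpr ⟨dAx _ _, dxxlate _ _ (by simp [hj0]; omega)⟩
      · exact Set.disjoint_union_right.mpr ⟨dAA _ _ (by omega), dAx _ _⟩
      · exact absurd (hv1'.trans hv2'.symm) hne'
      · exact dAx _ _
      · exact Set.disjoint_union_right.mpr
          ⟨(dAx _ _).symm, dxxlate _ _ (by simp [hj0]; omega)⟩
      · exact (dAx _ _).symm
      · exact absurd (by omega) hne'
    have htouch : ∀ i j : Fin (s+1), i ≠ j → Touches G (Cs i) (Cs j) := by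
      have key : ∀ i j : Fin (s+1), i < j → Touches G (Cs i) (Cs j) := by
        intro i j hij
        have hlt := Fin.lt_def.mp hij
        have hjlt := j.isLt
        have hAsub : A (tIdx i) ⊆ Cs i := by
          rcases shape i with ⟨hEq, -, -⟩ | ⟨hEq, -, -⟩ | ⟨hEq, hvi⟩
          · rw [hEq]; exact Set.subset_union_left
          · rw [hEq]
          · omega
        rcases shape j with ⟨hEq, -, -⟩ | ⟨hEq, -, hv0⟩ | ⟨hEq, -⟩
        · exact touches_mono hAsub (hEq ▸ Set.subset_union_right)
            (hAxtouch (tIdx i) (tIdx j))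
        · omega
        · rw [hEq]
          exact touches_mono hAsub subset_rfl (hAxtouch (tIdx i) j0)
      intro i j hij
      rcases lt_or_gt_of_ne hij with h | h
      · exact key i j h
      · exact touches_symm (key j i h)
    exact no_small_treewidth G s hs Cs hconn hdisj htouch
end

section
/- Every ample interrupted s-constellation is K_4-free and K_{3,3}-free. -/
open SimpleGraph

universe u v

theorem stmt_7 {V : Type u} [Fintype V] (G : SimpleGraph V) (s : ℕ) (hs : 1 ≤ s)
    (S L : Set V) (hcon : IsConstellation G S L s)
    (hamp : IsAmple G S L) (hint : IsInterrupted G S L s) :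
    G.CliqueFree 4 ∧
      ∀ X : Set V,
        ¬ Nonempty (G.induce X ≃g completeBipartiteGraph (Fin 3) (Fin 3)) := by
  classical
  obtain ⟨hcover, hdisjSL, hLpath, hstable, hSfin, hScard, hnb⟩ := hcon
  obtain ⟨n, hn, ⟨e⟩⟩ := hLpath
  have memL : ∀ v : V, v ∉ S → v ∈ L := fun v hv => by
    have hv2 : v ∈ S ∪ L := hcover ▸ Set.mem_univ v
    exact hv2.resolve_left hv
  have notS : ∀ {x y : V}, G.Adj x y → x ∈ S → y ∈ S → False := fun {x y} hxy hx hy =>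
    hstable hx hy hxy.ne hxy
  have hrel : ∀ {a b : V} (ha : a ∈ L) (hb : b ∈ L), G.Adj a b →
      ((e ⟨a,ha⟩).val + 1 = (e ⟨b,hb⟩).val ∨ (e ⟨b,hb⟩).val + 1 = (e ⟨a,ha⟩).val) := by
    intro a b ha hb hab
    exact pathGraph_adj.mp (e.map_adj_iff.mpr hab)
  have hne : ∀ {a b : V} (ha : a ∈ L) (hb : b ∈ L), a ≠ b →
      (e ⟨a,ha⟩).val ≠ (e ⟨b,hb⟩).val := by
    intro a b ha hb hab h
    have h2 : (⟨a,ha⟩ : L) = ⟨b,hb⟩ := e.injective (Fin.ext h)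
    exact hab (Subtype.mk_eq_mk.mp h2)
  have tri : ∀ {a b c : V}, a ∈ L → b ∈ L → c ∈ L →
      G.Adj a b → G.Adj b c → G.Adj a c → False := by
    intro a b c ha hb hc hab hbc hac
    have h1 := hrel ha hb hab
    have h2 := hrel hb hc hbc
    have h3 := hrel ha hc hac
    omega
  have c4 : ∀ {a₁ a₂ b₁ b₂ : V}, a₁ ∈ L → a₂ ∈ L → b₁ ∈ L → b₂ ∈ L →
      a₁ ≠ a₂ → b₁ ≠ b₂ → G.Adj a₁ b₁ → G.Adj a₁ b₂ → G.Adj a₂ b₁ → G.Adj a₂ b₂ → False := by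
    intro a₁ a₂ b₁ b₂ ha1 ha2 hb1 hb2 hane hbne h11 h12 h21 h22
    have k11 := hrel ha1 hb1 h11
    have k12 := hrel ha1 hb2 h12
    have k21 := hrel ha2 hb1 h21
    have k22 := hrel ha2 hb2 h22
    have n1 := hne ha1 ha2 hane
    have n2 := hne hb1 hb2 hbne
    omega
  constructor
  · intro t ht
    have hScap : (t.filter (· ∈ S)).card ≤ 1 := by
      refine Finset.card_le_one.mpr ?_
      intro x hx y hy
      simp only [Finset.mem_filter] at hx hy
      by_contra hxy
      exact notS (ht.1 hx.1 hy.1 hxy) hx.2 hy.2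
    have hsum : (t.filter (· ∈ S)).card + (t.filter (fun v => ¬ v ∈ S)).card = t.card :=
      Finset.card_filter_add_card_filter_not (fun v => v ∈ S)
    have hcard3 : 3 ≤ (t.filter (fun v => ¬ v ∈ S)).card := by
      have := ht.2
      omega
    obtain ⟨u, hu, hucard⟩ := Finset.exists_subset_card_eq hcard3
    obtain ⟨x, y, z, hxy, hxz, hyz, rfl⟩ := Finset.card_eq_three.mp hucard
    have hx := hu (show x ∈ ({x, y, z} : Finset V) by simp)
    have hy := hu (show y ∈ ({x, y, z} : Finset V) by simp)
    have hz := hu (show z ∈ ({x, y, z} : Finset V) by simp)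
    simp only [Finset.mem_filter] at hx hy hz
    exact tri (memL x hx.2) (memL y hy.2) (memL z hz.2)
      (ht.1 hx.1 hy.1 hxy) (ht.1 hy.1 hz.1 hyz) (ht.1 hx.1 hz.1 hxz)
  · intro X hX
    obtain ⟨f⟩ := hX
    set g := f.symm with hg
    set a : Fin 3 → V := fun i => (g (Sum.inl i) : V) with ha
    set b : Fin 3 → V := fun j => (g (Sum.inr j) : V) with hb
    have hadj : ∀ i j, G.Adj (a i) (b j) := by
      intro i j
      have : (completeBipartiteGraph (Fin 3) (Fin 3)).Adj (Sum.inl i) (Sum.inr j) := by simp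
      exact g.map_adj_iff.mpr this
    have hane : ∀ i i' : Fin 3, i ≠ i' → a i ≠ a i' := by
      intro i i' hii h
      exact hii (Sum.inl_injective (g.injective (Subtype.ext h)))
    have hbne : ∀ j j' : Fin 3, j ≠ j' → b j ≠ b j' := by
      intro j j' hjj h
      exact hjj (Sum.inr_injective (g.injective (Subtype.ext h)))
    -- at most one a in S given some b in L, etc.
    have key : ∀ (c d : Fin 3 → V), (∀ i j, G.Adj (c i) (d j)) →
        (∀ i i' : Fin 3, i ≠ i' → c i ≠ c i') → (∃ j, d j ∈ L) →
        ∃ p q : Fin 3, p ≠ q ∧ c p ∈ L ∧ c q ∈ L := by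
      intro c d hcd hcne ⟨j₀, hj₀⟩
      have atmost : ∀ i i' : Fin 3, i ≠ i' → c i ∈ S → c i' ∈ S → False := by
        intro i i' hii hi hi'
        exact hamp hi hi' (hcne i i' hii) hj₀ ⟨hcd i j₀, hcd i' j₀⟩
      by_cases h0 : c 0 ∈ S
      · refine ⟨1, 2, by decide, memL _ ?_, memL _ ?_⟩
        · exact fun h1 => atmost 0 1 (by decide) h0 h1
        · exact fun h2 => atmost 0 2 (by decide) h0 h2
      · by_cases h1 : c 1 ∈ S
        · refine ⟨0, 2, by decide, memL _ h0, memL _ ?_⟩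
          exact fun h2 => atmost 1 2 (by decide) h1 h2
        · exact ⟨0, 1, by decide, memL _ h0, memL _ h1⟩
    have hBL : ∃ j, b j ∈ L := by
      by_contra hB
      push_neg at hB
      have hbS : ∀ j, b j ∈ S := fun j => by
        by_contra h
        exact hB j (memL _ h)
      have haL : a 0 ∈ L := by
        refine memL _ fun h => ?_
        exact notS (hadj 0 0) h (hbS 0)
      exact hamp (hbS 0) (hbS 1) (hbne 0 1 (by decide)) haL
        ⟨(hadj 0 0).symm, (hadj 0 1).symm⟩
    obtain ⟨p, q, hpq, hapL, haqL⟩ := key a b hadj hane hBL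
    obtain ⟨u, v, huv, hbuL, hbvL⟩ := key b a (fun j i => (hadj i j).symm) hbne ⟨p, hapL⟩
    exact c4 hapL haqL hbuL hbvL (hane p q hpq) (hbne u v huv)
      (hadj p u) (hadj p v) (hadj q u) (hadj q v)
end

section
/- Let 𝔠 = (S, L) be an ample interrupted s-constellation for some s ∈ ℕ. Then for every two anticomplete induced subgraphs X_1, X_2 of 𝔠, there exists i ∈ {1,2} such that each connected component of X_i intersects S in at most one vertex. -/
open SimpleGraph

universe u v

section StmtAux
variable {V : Type u} {G : SimpleGraph V}

theorem myGetVertSupport {u v : V} (p : G.Walk u v) :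
    ∀ i : Fin p.support.length, p.support.get i = p.getVert i := by
  induction p with
  | nil =>
    rintro ⟨_|n, hi⟩
    · simp [Walk.getVert]
    · simp [Walk.support_nil] at hi
  | cons h q ih =>
    intro i
    rcases i with ⟨i, hi⟩
    cases i with
    | zero => simp [Walk.getVert]
    | succ n =>
      simp only [Walk.support_cons, List.length_cons] at hi ⊢
      rw [List.get_cons_succ]
      exact (ih ⟨n, by simpa [Nat.succ_lt_succ_iff] using hi⟩).trans rfl

theorem myEdgeIndex {u v x y : V} (p : G.Walk u v) (h : s(x,y) ∈ p.edges) :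
    ∃ k, k < p.length ∧ ((p.getVert k = x ∧ p.getVert (k+1) = y) ∨
      (p.getVert k = y ∧ p.getVert (k+1) = x)) := by
  induction p with
  | nil => simp at h
  | cons hadj q ih =>
    rw [Walk.edges_cons, List.mem_cons] at h
    rcases h with h | h
    · refine ⟨0, by simp, ?_⟩
      rw [Sym2.eq_iff] at h
      simp only [Walk.getVert_zero, Walk.getVert_cons_succ]
      rcases h with ⟨rfl, rfl⟩ | ⟨rfl, rfl⟩
      · exact Or.inl ⟨rfl, rfl⟩
      · exact Or.inr ⟨rfl, rfl⟩
    · obtain ⟨k, hk, hcase⟩ := ih h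
      exact ⟨k+1, by simpa using Nat.succ_lt_succ hk, by simpa [Walk.getVert_cons_succ] using hcase⟩

theorem myLenOneEdge {u v : V} (q : G.Walk u v) (h : q.length = 1) : s(u,v) ∈ q.edges := by
  cases q with
  | nil => simp at h
  | cons hadj q' =>
    have : q'.length = 0 := by simpa using h
    have := Walk.eq_of_length_eq_zero this
    subst this
    simp

theorem myPathIn {a b : V} (p : G.Walk a b) (hp : p.IsPath)
    (hcl : ∀ u ∈ p.support, ∀ v ∈ p.support, G.Adj u v → s(u,v) ∈ p.edges) :
    IsPathIn G p := by
  classical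
  refine ⟨hp, p.length + 1, Nat.succ_pos _, ?_⟩
  have nd : p.support.Nodup := hp.support_nodup
  have hlen : p.support.length = p.length + 1 := p.length_support
  have key : ∀ i j : Fin p.support.length,
      G.Adj (p.support.get i) (p.support.get j) ↔ ((i:ℕ)+1 = (j:ℕ) ∨ (j:ℕ)+1 = (i:ℕ)) := by
    intro i j
    constructor
    · intro h
      have hmem : ∀ k : Fin p.support.length, p.support.get k ∈ p.support :=
        fun k => List.get_mem _ _
      obtain ⟨k, hk, hcase⟩ := myEdgeIndex p (hcl _ (hmem i) _ (hmem j) h)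
      have hk1 : k < p.support.length := by omega
      have hk2 : k + 1 < p.support.length := by omega
      rcases hcase with ⟨h1, h2⟩ | ⟨h1, h2⟩
      · have e1 : (⟨k, hk1⟩ : Fin p.support.length) = i := nd.get_inj_iff.1
          (by rw [myGetVertSupport]; exact h1)
        have e2 : (⟨k+1, hk2⟩ : Fin p.support.length) = j := nd.get_inj_iff.1
          (by rw [myGetVertSupport]; exact h2)
        have e1' : k = (i:ℕ) := by simpa using congrArg Fin.val e1
        have e2' : k + 1 = (j:ℕ) := by simpa using congrArg Fin.val e2
        omega
      · have e1 : (⟨k, hk1⟩ : Fin p.support.length) = j := nd.get_inj_iff.1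
          (by rw [myGetVertSupport]; exact h1)
        have e2 : (⟨k+1, hk2⟩ : Fin p.support.length) = i := nd.get_inj_iff.1
          (by rw [myGetVertSupport]; exact h2)
        have e1' : k = (j:ℕ) := by simpa using congrArg Fin.val e1
        have e2' : k + 1 = (i:ℕ) := by simpa using congrArg Fin.val e2
        omega
    · intro hij
      rw [myGetVertSupport p i, myGetVertSupport p j]
      rcases hij with hij | hij
      · have hlt : (i : ℕ) < p.length := by omega
        exact hij ▸ p.adj_getVert_succ hlt
      · have hlt : (j : ℕ) < p.length := by omega
        exact (hij ▸ p.adj_getVert_succ hlt).symm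
  -- build the isomorphism
  let e0 : Fin p.support.length ≃ {x // x ∈ p.support} := nd.getEquiv _
  have hget : ∀ z : {x // x ∈ p.support}, p.support.get (e0.symm z) = (z : V) := by
    intro z
    have h : p.support.get (e0.symm z) = ↑(e0 (e0.symm z)) := by
      simp [e0, List.Nodup.getEquiv]
    rw [h, Equiv.apply_symm_apply]
  refine ⟨?_⟩
  refine ⟨(Equiv.subtypeEquivRight (fun z => Iff.rfl)).trans
    (e0.symm.trans (finCongr hlen)), ?_⟩
  intro x y
  simp only [Equiv.trans_apply, finCongr_apply, pathGraph_adj, Fin.coe_cast,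
    comap_adj, Function.Embedding.coe_subtype]
  have h2 := key (e0.symm ((Equiv.subtypeEquivRight (fun z => Iff.rfl)) x))
    (e0.symm ((Equiv.subtypeEquivRight (fun z => Iff.rfl)) y))
  rw [hget, hget] at h2
  exact h2.symm

theorem myRoute (S X : Set V)
    (hX : ∃ (a c : V) (w : G.Walk a c), a ∈ S ∧ a ∈ X ∧ c ∈ S ∧ c ∈ X ∧ a ≠ c ∧
      ∀ z ∈ w.support, z ∈ X) :
    ∃ (a c : V) (p : G.Walk a c), a ∈ S ∧ a ∈ X ∧ c ∈ S ∧ c ∈ X ∧ a ≠ c ∧ p.IsPath ∧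
      (∀ z ∈ p.support, z ∈ X) ∧ (∀ z ∈ p.support, z ≠ a → z ≠ c → z ∉ S) ∧
      (∀ u ∈ p.support, ∀ v ∈ p.support, G.Adj u v → s(u,v) ∈ p.edges) := by
  classical
  set T : Set ℕ := {n | ∃ (a c : V) (p : G.Walk a c), a ∈ S ∧ a ∈ X ∧ c ∈ S ∧ c ∈ X ∧
    a ≠ c ∧ p.IsPath ∧ (∀ z ∈ p.support, z ∈ X) ∧ p.length = n} with hT
  have hTne : T.Nonempty := by
    obtain ⟨a, c, w, haS, haX, hcS, hcX, hne, hsupp⟩ := hX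
    exact ⟨(w.toPath : G.Walk a c).length, a, c, (w.toPath : G.Walk a c), haS, haX, hcS, hcX,
      hne, w.toPath.2, fun z hz => hsupp z (Walk.support_toPath_subset w hz), rfl⟩
  have hmem := Nat.sInf_mem hTne
  obtain ⟨a, c, p, haS, haX, hcS, hcX, hne, hpath, hsupp, hlen⟩ := hmem
  have hmin : ∀ m ∈ T, sInf T ≤ m := fun m hm => Nat.sInf_le hm
  refine ⟨a, c, p, haS, haX, hcS, hcX, hne, hpath, hsupp, ?_, ?_⟩
  · -- interior avoids S
    intro z hz hza hzc hzS
    have hzX : z ∈ X := hsupp z hz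
    have hqlen : (p.takeUntil z hz).length < p.length := by
      have h1 := congrArg Walk.length (p.take_spec hz)
      rw [Walk.length_append] at h1
      have hd : (p.dropUntil z hz).length ≠ 0 := fun h0 =>
        hzc (SimpleGraph.Walk.eq_of_length_eq_zero h0)
      omega
    have hmem2 : (p.takeUntil z hz).length ∈ T := ⟨a, z, p.takeUntil z hz, haS, haX, hzS, hzX,
      fun h => hza h.symm, hpath.takeUntil hz,
      fun y hy => hsupp y (Walk.support_takeUntil_subset p hz hy), rfl⟩
    have := hmin _ hmem2
    omega
  · -- edge-closed
    intro u hu v hv huv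
    by_contra hnE
    have hune : u ≠ v := huv.ne
    -- smaller walk contradiction helper
    have shorter : ∀ (r : G.Walk a c), (∀ z ∈ r.support, z ∈ X) → r.length < p.length → False := by
      intro r hrX hrlen
      have : (r.toPath : G.Walk a c).length ∈ T := ⟨a, c, _, haS, haX, hcS, hcX, hne, r.toPath.2,
        fun y hy => hrX y (Walk.support_toPath_subset r hy), rfl⟩
      have h1 := hmin _ this
      have h2 : (r.toPath : G.Walk a c).length ≤ r.length := Walk.length_bypass_le r
      omega
    have hlen12 : (p.takeUntil u hu).length + (p.dropUntil u hu).length = p.length := by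
      have h1 := congrArg Walk.length (p.take_spec hu)
      rw [Walk.length_append] at h1
      omega
    have hvmem : v ∈ (p.takeUntil u hu).support ∨ v ∈ (p.dropUntil u hu).support := by
      have h1 : v ∈ ((p.takeUntil u hu).append (p.dropUntil u hu)).support := by
        rw [p.take_spec hu]; exact hv
      rw [Walk.mem_support_append_iff] at h1
      exact h1
    rcases hvmem with hv1 | hv2
    · -- v before u
      have hlen56 : ((p.takeUntil u hu).takeUntil v hv1).length +
          ((p.takeUntil u hu).dropUntil v hv1).length = (p.takeUntil u hu).length := by
        have h1 := congrArg Walk.length ((p.takeUntil u hu).take_spec hv1)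
        rw [Walk.length_append] at h1
        omega
      have h6 : 2 ≤ ((p.takeUntil u hu).dropUntil v hv1).length := by
        rcases Nat.lt_or_ge ((p.takeUntil u hu).dropUntil v hv1).length 2 with h | h
        · have h01 : ((p.takeUntil u hu).dropUntil v hv1).length = 0 ∨
              ((p.takeUntil u hu).dropUntil v hv1).length = 1 := by omega
          rcases h01 with h' | h'
          · exact absurd (SimpleGraph.Walk.eq_of_length_eq_zero h') (fun h => hune h.symm)
          · exact absurd (Walk.edges_takeUntil_subset p hu
              (Walk.edges_dropUntil_subset (p.takeUntil u hu) hv1 (myLenOneEdge _ h')))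
              (by rw [Sym2.eq_swap] at hnE; exact hnE)
        · exact h
      refine shorter (((p.takeUntil u hu).takeUntil v hv1).append
        (Walk.cons huv.symm (p.dropUntil u hu))) ?_ ?_
      · intro z hz
        rw [Walk.mem_support_append_iff] at hz
        rcases hz with hz | hz
        · exact hsupp z (Walk.support_takeUntil_subset p hu
            (Walk.support_takeUntil_subset (p.takeUntil u hu) hv1 hz))
        · rw [Walk.support_cons, List.mem_cons] at hz
          rcases hz with rfl | hz
          · exact hsupp _ hv
          · exact hsupp z (Walk.support_dropUntil_subset p hu hz)
      · rw [Walk.length_append, Walk.length_cons]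
        omega
    · -- v after u
      have hlen34 : ((p.dropUntil u hu).takeUntil v hv2).length +
          ((p.dropUntil u hu).dropUntil v hv2).length = (p.dropUntil u hu).length := by
        have h1 := congrArg Walk.length ((p.dropUntil u hu).take_spec hv2)
        rw [Walk.length_append] at h1
        omega
      have h3 : 2 ≤ ((p.dropUntil u hu).takeUntil v hv2).length := by
        rcases Nat.lt_or_ge ((p.dropUntil u hu).takeUntil v hv2).length 2 with h | h
        · have h01 : ((p.dropUntil u hu).takeUntil v hv2).length = 0 ∨
              ((p.dropUntil u hu).takeUntil v hv2).length = 1 := by omega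
          rcases h01 with h' | h'
          · exact absurd (SimpleGraph.Walk.eq_of_length_eq_zero h') hune
          · exact absurd (Walk.edges_dropUntil_subset p hu
              (Walk.edges_takeUntil_subset (p.dropUntil u hu) hv2 (myLenOneEdge _ h'))) hnE
        · exact h
      refine shorter ((p.takeUntil u hu).append
        (Walk.cons huv ((p.dropUntil u hu).dropUntil v hv2))) ?_ ?_
      · intro z hz
        rw [Walk.mem_support_append_iff] at hz
        rcases hz with hz | hz
        · exact hsupp z (Walk.support_takeUntil_subset p hu hz)
        · rw [Walk.support_cons, List.mem_cons] at hz
          rcases hz with rfl | hz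
          · exact hsupp _ hu
          · exact hsupp z (Walk.support_dropUntil_subset p hu
              (Walk.support_dropUntil_subset (p.dropUntil u hu) hv2 hz))
      · rw [Walk.length_append, Walk.length_cons]
        omega

end StmtAux

theorem stmt_8 {V : Type u} [Fintype V] (G : SimpleGraph V) (s : ℕ) (hs : 1 ≤ s)
    (S L : Set V) (hcon : IsConstellation G S L s)
    (hamp : IsAmple G S L) (hint : IsInterrupted G S L s)
    (X₁ X₂ : Set V) (hanti : Anticomplete G X₁ X₂) :
    (∀ a b : X₁, (a : V) ∈ S → (b : V) ∈ S → (G.induce X₁).Reachable a b → a = b) ∨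
    (∀ a b : X₂, (a : V) ∈ S → (b : V) ∈ S → (G.induce X₂).Reachable a b → a = b) := by
    classical
  by_contra hcontra
  push_neg at hcontra
  obtain ⟨h1, h2⟩ := hcontra
  obtain ⟨hSL, hdisjSL, hLpath, hstab, hSfin, hScard, hnbr⟩ := hcon
  obtain ⟨x, hxinj, hxrange, hprop⟩ := hint
  obtain ⟨hXdisj, hXedge⟩ := hanti
  have hinL : ∀ z : V, z ∉ S → z ∈ L := by
    intro z hz
    have : z ∈ S ∪ L := by rw [hSL]; trivial
    exact this.resolve_left hz
  have main : ∀ (X : Set V),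
      (∃ a b : X, (a:V) ∈ S ∧ (b:V) ∈ S ∧ (G.induce X).Reachable a b ∧ a ≠ b) →
      ∃ (i j : Fin s) (q : G.Walk (x i) (x j)), i < j ∧ IsPathIn G q ∧
        interiorSet G q ⊆ L ∧ (∀ z ∈ q.support, z ∈ X) := by
    intro X hX
    obtain ⟨a, b, haS, hbS, hr, hab⟩ := hX
    obtain ⟨w0⟩ := hr
    have hw : ∀ z ∈ (w0.map (SimpleGraph.Embedding.induce X).toHom).support, z ∈ X := by
      intro z hz
      rw [Walk.support_map, List.mem_map] at hz
      obtain ⟨y, _, rfl⟩ := hz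
      exact y.2
    obtain ⟨a', c', p, ha'S, ha'X, hc'S, hc'X, hne, hpath, hsupp, hint', hcl⟩ :=
      myRoute S X ⟨a, b, w0.map (SimpleGraph.Embedding.induce X).toHom, haS, a.2, hbS, b.2,
        fun h => hab (Subtype.ext h), hw⟩
    obtain ⟨i, hi⟩ : ∃ i, x i = a' := by rw [← hxrange] at ha'S; exact ha'S
    obtain ⟨j, hj⟩ : ∃ j, x j = c' := by rw [← hxrange] at hc'S; exact hc'S
    have hijne : i ≠ j := fun h => hne (by rw [← hi, ← hj, h])
    rcases hijne.lt_or_gt with hij | hij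
    · refine ⟨i, j, p.copy hi.symm hj.symm, hij, ?_, ?_, ?_⟩
      · refine myPathIn _ (by simpa using hpath) ?_
        intro u hu v hv huv
        rw [Walk.support_copy] at hu hv
        rw [Walk.edges_copy]
        exact hcl u hu v hv huv
      · rintro z ⟨hzs, hza, hzc⟩
        rw [Walk.support_copy] at hzs
        exact hinL z (hint' z hzs (by rwa [hi] at hza) (by rwa [hj] at hzc))
      · intro z hz
        rw [Walk.support_copy] at hz
        exact hsupp z hz
    · refine ⟨j, i, p.reverse.copy hj.symm hi.symm, hij, ?_, ?_, ?_⟩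
      · refine myPathIn _ (by simpa using hpath.reverse) ?_
        intro u hu v hv huv
        rw [Walk.support_copy, Walk.support_reverse, List.mem_reverse] at hu hv
        rw [Walk.edges_copy, Walk.edges_reverse, List.mem_reverse]
        exact hcl u hu v hv huv
      · rintro z ⟨hzs, hza, hzc⟩
        rw [Walk.support_copy, Walk.support_reverse, List.mem_reverse] at hzs
        exact hinL z (hint' z hzs (by rwa [hi] at hzc) (by rwa [hj] at hza))
      · intro z hz
        rw [Walk.support_copy, Walk.support_reverse, List.mem_reverse] at hz
        exact hsupp z hz
  obtain ⟨i₁, j₁, q₁, hlt₁, hPI₁, hIL₁, hXs₁⟩ := main X₁ h1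
  obtain ⟨i₂, j₂, q₂, hlt₂, hPI₂, hIL₂, hXs₂⟩ := main X₂ h2
  have hend₁ : x j₁ ∈ X₁ := hXs₁ _ q₁.end_mem_support
  have hend₂ : x j₂ ∈ X₂ := hXs₂ _ q₂.end_mem_support
  rcases lt_trichotomy j₁ j₂ with h | h | h
  · obtain ⟨z, hz, hadj⟩ := hprop hlt₁ h q₁ hPI₁ hIL₁
    exact hXedge (hXs₁ z hz.1) hend₂ hadj.symm
  · exact Set.disjoint_left.mp hXdisj hend₁ (h ▸ hend₂)
  · obtain ⟨z, hz, hadj⟩ := hprop hlt₂ h q₂ hPI₂ hIL₂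
    exact hXedge hend₁ (hXs₂ z hz.1) hadj
end

section
/- For every c ∈ ℕ, every proper subdivision of the complete graph K_{2c+2} contains two anticomplete induced subgraphs, each isomorphic to a subdivision of K_{c+1}. -/
open SimpleGraph

universe u v

section AuxSubdiv

variable {V : Type u} {G : SimpleGraph V}

/-- Lift a walk whose support lies in `X` to the induced subgraph. -/
def induceWalk {X : Set V} : {u w : V} → (p : G.Walk u w) →
    (hp : ∀ z ∈ p.support, z ∈ X) →
    (G.induce X).Walk ⟨u, hp u p.start_mem_support⟩ ⟨w, hp w p.end_mem_support⟩
  | _, _, .nil, _ => .nil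
  | _, _, .cons h q, hp =>
      .cons (by exact h) (induceWalk q fun z hz => hp z (List.mem_cons_of_mem _ hz))

lemma induceWalk_map {X : Set V} {u w : V} (p : G.Walk u w)
    (hp : ∀ z ∈ p.support, z ∈ X) :
    (induceWalk p hp).map (SimpleGraph.Embedding.induce X).toHom = p := by
  induction p with
  | nil => rfl
  | cons h q ih =>
      show SimpleGraph.Walk.cons _ _ = _
      rw [ih]
      rfl

lemma induce_val_injective {X : Set V} :
    Function.Injective ((SimpleGraph.Embedding.induce (G := G) X).toHom : X → V) :=
  Subtype.val_injective

lemma induceWalk_support {X : Set V} {u w : V} (p : G.Walk u w)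
    (hp : ∀ z ∈ p.support, z ∈ X) {z : X} :
    z ∈ (induceWalk p hp).support ↔ (z : V) ∈ p.support := by
  constructor
  · intro hz
    have := SimpleGraph.Walk.support_map (induceWalk p hp)
      (f := (SimpleGraph.Embedding.induce X).toHom)
    rw [induceWalk_map] at this
    erw [this]
    exact List.mem_map_of_mem hz
  · intro hz
    have := SimpleGraph.Walk.support_map (induceWalk p hp)
      (f := (SimpleGraph.Embedding.induce X).toHom)
    rw [induceWalk_map] at this
    erw [this] at hz
    obtain ⟨z', hz', hzz⟩ := List.mem_map.mp hz
    exact (Subtype.val_injective hzz) ▸ hz'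

lemma induceWalk_edges {X : Set V} {u w : V} (p : G.Walk u w)
    (hp : ∀ z ∈ p.support, z ∈ X) {x y : X} :
    s(x, y) ∈ (induceWalk p hp).edges ↔ s((x : V), (y : V)) ∈ p.edges := by
  have hmap := SimpleGraph.Walk.edges_map (induceWalk p hp)
    (f := (SimpleGraph.Embedding.induce X).toHom)
  rw [induceWalk_map] at hmap
  constructor
  · intro hz
    erw [hmap]
    exact List.mem_map_of_mem hz
  · intro hz
    erw [hmap] at hz
    obtain ⟨e', he', hee⟩ := List.mem_map.mp hz
    have : e' = s(x, y) := by
      induction e' using Sym2.ind with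
      | _ a b =>
        simp only [Sym2.map_pair_eq] at hee
        rcases Sym2.eq_iff.mp hee with ⟨h1, h2⟩ | ⟨h1, h2⟩
        · rw [Subtype.val_injective h1, Subtype.val_injective h2]
        · rw [Subtype.val_injective h1, Subtype.val_injective h2, Sym2.eq_swap]
    exact this ▸ he'

/-- In a path of length at least 2, the edge joining the two endpoints does not occur. -/
lemma endpoints_edge_not_mem {u w : V} (p : G.Walk u w) (hp : p.IsPath)
    (hlen : 2 ≤ p.length) : s(u, w) ∉ p.edges := by
  intro hmem
  cases p with
  | nil => simp at hmem
  | cons h q =>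
    rename_i b
    rw [SimpleGraph.Walk.edges_cons, List.mem_cons] at hmem
    rcases hmem with hmem | hmem
    · rcases Sym2.eq_iff.mp hmem with ⟨h1, h2⟩ | ⟨h1, h2⟩
      · subst h2
        have hcp := (SimpleGraph.Walk.cons_isPath_iff _ _).mp hp
        have hq := SimpleGraph.Walk.isPath_iff_eq_nil.mp hcp.1
        subst hq
        simp at hlen
      · exact h.ne h1
    · have : u ∈ q.support := q.fst_mem_support_of_mem_edges hmem
      exact ((SimpleGraph.Walk.cons_isPath_iff _ _).mp hp).2 this

end AuxSubdiv

section KeySubdiv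

variable {V : Type u} {c : ℕ} {G : SimpleGraph V}
  {f : Fin (2 * c + 2) → V}
  {P : ∀ ⦃a b : Fin (2 * c + 2)⦄, (completeGraph (Fin (2 * c + 2))).Adj a b → G.Walk (f a) (f b)}

/-- Union of the supports of the subdivision paths among a subfamily of branch vertices. -/
def XsetOf (P : ∀ ⦃a b : Fin (2 * c + 2)⦄,
      (completeGraph (Fin (2 * c + 2))).Adj a b → G.Walk (f a) (f b))
    (g : Fin (c + 1) → Fin (2 * c + 2)) : Set V :=
  {x | ∃ (i j : Fin (c + 1)) (h : (completeGraph (Fin (2 * c + 2))).Adj (g i) (g j)),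
        x ∈ (P h).support}

/-- No two branch vertices are adjacent in a proper subdivision. -/
lemma no_branch_adj
    (hmod : IsSubdivisionModel (completeGraph (Fin (2 * c + 2))) G f P)
    (hprop : ∀ ⦃a b⦄ (h : (completeGraph (Fin (2 * c + 2))).Adj a b), 2 ≤ (P h).length)
    {x y : V} (hx : x ∈ Set.range f) (hy : y ∈ Set.range f) : ¬ G.Adj x y := by
  obtain ⟨hinj, hpath, hsymm, hrange, hdisj, hcover, hedge⟩ := hmod
  intro hadj
  obtain ⟨a, b, h, hmem⟩ := hedge s(x, y) hadj
  have hxs : x ∈ (P h).support := (P h).fst_mem_support_of_mem_edges hmem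
  have hys : y ∈ (P h).support := (P h).snd_mem_support_of_mem_edges hmem
  have hx' : x = f a ∨ x = f b := hrange h x hxs hx
  have hy' : y = f a ∨ y = f b := hrange h y hys hy
  have hne : x ≠ y := hadj.ne
  have : s(x, y) = s(f a, f b) := by
    rcases hx' with rfl | rfl <;> rcases hy' with rfl | rfl
    · exact absurd rfl hne
    · rfl
    · exact Sym2.eq_swap
    · exact absurd rfl hne
  rw [this] at hmem
  exact endpoints_edge_not_mem (P h) (hpath h) (hprop h) hmem

/-- A vertex of `XsetOf` that is a branch vertex must be one of the chosen branch vertices. -/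
lemma mem_XsetOf_range
    (hmod : IsSubdivisionModel (completeGraph (Fin (2 * c + 2))) G f P)
    {g : Fin (c + 1) → Fin (2 * c + 2)} {x : V}
    (hx : x ∈ XsetOf P g) (hxr : x ∈ Set.range f) : ∃ i, x = f (g i) := by
  obtain ⟨hinj, hpath, hsymm, hrange, hdisj, hcover, hedge⟩ := hmod
  obtain ⟨i, j, h, hmem⟩ := hx
  rcases hrange h x hmem hxr with h1 | h1
  · exact ⟨i, h1⟩
  · exact ⟨j, h1⟩

lemma anticomplete_XsetOf
    (hmod : IsSubdivisionModel (completeGraph (Fin (2 * c + 2))) G f P)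
    (hprop : ∀ ⦃a b⦄ (h : (completeGraph (Fin (2 * c + 2))).Adj a b), 2 ≤ (P h).length)
    {g₁ g₂ : Fin (c + 1) → Fin (2 * c + 2)}
    (hgg : ∀ i j, g₁ i ≠ g₂ j) :
    Anticomplete G (XsetOf P g₁) (XsetOf P g₂) := by
  obtain ⟨hinj, hpath, hsymm, hrange, hdisj, hcover, hedge⟩ := hmod
  have hsym_ne : ∀ (i j i' j' : Fin (c + 1)),
      s(g₁ i, g₁ j) ≠ (s(g₂ i', g₂ j') : Sym2 (Fin (2 * c + 2))) := by
    intro i j i' j' heq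
    rcases Sym2.eq_iff.mp heq with ⟨h1, _⟩ | ⟨h1, _⟩
    · exact hgg i i' h1
    · exact hgg i j' h1
  constructor
  · rw [Set.disjoint_left]
    rintro x ⟨i, j, h, hmem⟩ ⟨i', j', h', hmem'⟩
    have hxr : x ∈ Set.range f := hdisj h h' (hsym_ne i j i' j') x hmem hmem'
    rcases hrange h x hmem hxr with h1 | h1 <;>
      rcases hrange h' x hmem' hxr with h2 | h2
    · exact hgg i i' (hinj (h1 ▸ h2))
    · exact hgg i j' (hinj (h1 ▸ h2))
    · exact hgg j i' (hinj (h1 ▸ h2))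
    · exact hgg j j' (hinj (h1 ▸ h2))
  · rintro x ⟨i, j, h, hmem⟩ y ⟨i', j', h', hmem'⟩ hadj
    obtain ⟨a, b, hab, hemem⟩ := hedge s(x, y) hadj
    have hxs : x ∈ (P hab).support := (P hab).fst_mem_support_of_mem_edges hemem
    have hys : y ∈ (P hab).support := (P hab).snd_mem_support_of_mem_edges hemem
    by_cases hxcase : s(a, b) = (s(g₁ i, g₁ j) : Sym2 (Fin (2 * c + 2)))
    · -- y is then a branch vertex of both families: contradiction
      have hyr : y ∈ Set.range f := hdisj hab h' (hxcase ▸ hsym_ne i j i' j') y hys hmem'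
      obtain ⟨k', hk'⟩ : ∃ k', y = f (g₂ k') :=
        mem_XsetOf_range ⟨hinj, hpath, hsymm, hrange, hdisj, hcover, hedge⟩
          ⟨i', j', h', hmem'⟩ hyr
      have hyab : y = f a ∨ y = f b := hrange hab y hys hyr
      have : ∃ k, y = f (g₁ k) := by
        rcases Sym2.eq_iff.mp hxcase with ⟨ha, hb⟩ | ⟨ha, hb⟩ <;>
          rcases hyab with h1 | h1
        · exact ⟨i, ha ▸ h1⟩
        · exact ⟨j, hb ▸ h1⟩
        · exact ⟨j, ha ▸ h1⟩
        · exact ⟨i, hb ▸ h1⟩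
      obtain ⟨k, hk⟩ := this
      exact hgg k k' (hinj (hk.symm.trans hk'))
    · by_cases hycase : s(a, b) = (s(g₂ i', g₂ j') : Sym2 (Fin (2 * c + 2)))
      · -- x is then a branch vertex of both families: contradiction
        have hxr : x ∈ Set.range f := hdisj hab h hxcase x hxs hmem
        obtain ⟨k, hk⟩ : ∃ k, x = f (g₁ k) :=
          mem_XsetOf_range ⟨hinj, hpath, hsymm, hrange, hdisj, hcover, hedge⟩
            ⟨i, j, h, hmem⟩ hxr
        have hxab : x = f a ∨ x = f b := hrange hab x hxs hxr
        have : ∃ k', x = f (g₂ k') := by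
          rcases Sym2.eq_iff.mp hycase with ⟨ha, hb⟩ | ⟨ha, hb⟩ <;>
            rcases hxab with h1 | h1
          · exact ⟨i', ha ▸ h1⟩
          · exact ⟨j', hb ▸ h1⟩
          · exact ⟨j', ha ▸ h1⟩
          · exact ⟨i', hb ▸ h1⟩
        obtain ⟨k', hk'⟩ := this
        exact hgg k k' (hinj (hk.symm.trans hk'))
      · have hxr : x ∈ Set.range f := hdisj hab h hxcase x hxs hmem
        have hyr : y ∈ Set.range f := hdisj hab h' hycase y hys hmem'
        exact no_branch_adj ⟨hinj, hpath, hsymm, hrange, hdisj, hcover, hedge⟩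
          hprop hxr hyr hadj

lemma subdivision_XsetOf
    (hmod : IsSubdivisionModel (completeGraph (Fin (2 * c + 2))) G f P)
    (hprop : ∀ ⦃a b⦄ (h : (completeGraph (Fin (2 * c + 2))).Adj a b), 2 ≤ (P h).length)
    (hc : 1 ≤ c)
    {g : Fin (c + 1) → Fin (2 * c + 2)} (hg : Function.Injective g) :
    IsSubdivisionOf (completeGraph (Fin (c + 1))) (G.induce (XsetOf P g)) := by
  obtain ⟨hinj, hpath, hsymm, hrange, hdisj, hcover, hedge⟩ := hmod
  have hadjg : ∀ {a b : Fin (c + 1)}, (completeGraph (Fin (c + 1))).Adj a b →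
      (completeGraph (Fin (2 * c + 2))).Adj (g a) (g b) := fun h he => h (hg he)
  have hmemX : ∀ {a b : Fin (c + 1)} (h : (completeGraph (Fin (c + 1))).Adj a b)
      (z : V), z ∈ (P (hadjg h)).support → z ∈ XsetOf P g :=
    fun h z hz => ⟨_, _, hadjg h, hz⟩
  have hfmem : ∀ i : Fin (c + 1), f (g i) ∈ XsetOf P g := by
    intro i
    have : Nontrivial (Fin (c + 1)) := Fin.nontrivial_iff_two_le.mpr (by omega)
    obtain ⟨j, hj⟩ := exists_ne i
    have h : (completeGraph (Fin (c + 1))).Adj i j := fun he => hj he.symm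
    exact ⟨i, j, hadjg h, (P (hadjg h)).start_mem_support⟩
  refine ⟨fun i => ⟨f (g i), hfmem i⟩,
    fun a b h => induceWalk (P (hadjg h)) (hmemX h), ?_, ?_, ?_, ?_, ?_, ?_, ?_⟩
  · intro i j hij
    exact hg (hinj (congrArg Subtype.val hij))
  · intro a b h
    apply SimpleGraph.Walk.IsPath.of_map (f := (SimpleGraph.Embedding.induce (XsetOf P g)).toHom)
    rw [induceWalk_map]
    exact hpath _
  · intro a b h
    apply SimpleGraph.Walk.map_injective_of_injective
      (induce_val_injective (G := G) (X := XsetOf P g))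
    rw [induceWalk_map, ← SimpleGraph.Walk.reverse_map, induceWalk_map]
    exact hsymm (hadjg h)
  · intro a b h x hx hxr
    obtain ⟨i, rfl⟩ := hxr
    have hx' := (induceWalk_support _ _).mp hx
    rcases hrange (hadjg h) _ hx' ⟨g i, rfl⟩ with h1 | h1
    · exact Or.inl (Subtype.ext h1)
    · exact Or.inr (Subtype.ext h1)
  · intro a b h a' b' h' hne x hx hx'
    have hne2 : s(g a, g b) ≠ (s(g a', g b') : Sym2 (Fin (2 * c + 2))) := by
      intro he
      apply hne
      rcases Sym2.eq_iff.mp he with ⟨h1, h2⟩ | ⟨h1, h2⟩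
      · rw [hg h1, hg h2]
      · rw [hg h1, hg h2, Sym2.eq_swap]
    have hxr := hdisj (hadjg h) (hadjg h') hne2 _
      ((induceWalk_support _ _).mp hx) ((induceWalk_support _ _).mp hx')
    obtain ⟨k, hk⟩ := mem_XsetOf_range
      ⟨hinj, hpath, hsymm, hrange, hdisj, hcover, hedge⟩ x.2 hxr
    exact ⟨k, (Subtype.ext hk).symm⟩
  · intro x
    obtain ⟨i, j, hij, hmem⟩ := x.2
    exact Or.inr ⟨i, j, fun he => hij (by rw [he]),
      (induceWalk_support _ _).mpr hmem⟩
  · intro e he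
    induction e using Sym2.ind with
    | _ x y =>
      have hadj : G.Adj ↑x ↑y := he
      obtain ⟨a, b, hab, hemem⟩ := hedge s((x : V), (y : V)) hadj
      by_cases hcase : ∃ (a' b' : Fin (c + 1)) (_ : (completeGraph (Fin (c + 1))).Adj a' b'),
          s(a, b) = (s(g a', g b') : Sym2 (Fin (2 * c + 2)))
      · obtain ⟨a', b', h', heq⟩ := hcase
        rcases Sym2.eq_iff.mp heq with ⟨h1, h2⟩ | ⟨h1, h2⟩
        · subst h1; subst h2
          exact ⟨a', b', h', (induceWalk_edges _ _).mpr hemem⟩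
        · subst h1; subst h2
          refine ⟨a', b', h', (induceWalk_edges _ _).mpr ?_⟩
          have hrev : P hab = (P (hadjg h')).reverse := hsymm (hadjg h')
          rw [hrev, SimpleGraph.Walk.edges_reverse, List.mem_reverse] at hemem
          exact hemem
      · push_neg at hcase
        exfalso
        obtain ⟨i, j, hij, hmemx⟩ := x.2
        obtain ⟨i', j', hij', hmemy⟩ := y.2
        have hne1 : s(a, b) ≠ (s(g i, g j) : Sym2 (Fin (2 * c + 2))) :=
          hcase i j (fun he' => hij (by rw [he']))
        have hne2 : s(a, b) ≠ (s(g i', g j') : Sym2 (Fin (2 * c + 2))) :=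
          hcase i' j' (fun he' => hij' (by rw [he']))
        have hxs : (x : V) ∈ (P hab).support := (P hab).fst_mem_support_of_mem_edges hemem
        have hys : (y : V) ∈ (P hab).support := (P hab).snd_mem_support_of_mem_edges hemem
        have hxr : (x : V) ∈ Set.range f := hdisj hab hij hne1 _ hxs hmemx
        have hyr : (y : V) ∈ Set.range f := hdisj hab hij' hne2 _ hys hmemy
        exact no_branch_adj ⟨hinj, hpath, hsymm, hrange, hdisj, hcover, hedge⟩
          hprop hxr hyr hadj

end KeySubdiv

theorem stmt_10 {V : Type u} [Fintype V] (c : ℕ) (hc : 1 ≤ c) (G : SimpleGraph V)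
    (h : IsProperSubdivisionOf (completeGraph (Fin (2 * c + 2))) G) :
    ∃ X Y : Set V, Anticomplete G X Y ∧
      IsSubdivisionOf (completeGraph (Fin (c + 1))) (G.induce X) ∧
      IsSubdivisionOf (completeGraph (Fin (c + 1))) (G.induce Y) := by
  obtain ⟨f, P, hmod, hprop⟩ := h
  let g₁ : Fin (c + 1) → Fin (2 * c + 2) := fun i => ⟨i.val, by have := i.isLt; omega⟩
  let g₂ : Fin (c + 1) → Fin (2 * c + 2) := fun i => ⟨i.val + (c + 1), by have := i.isLt; omega⟩
  have hg₁ : Function.Injective g₁ := fun a b hab =>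
    Fin.ext (by simpa [g₁] using congrArg Fin.val hab)
  have hg₂ : Function.Injective g₂ := fun a b hab =>
    Fin.ext (by have := congrArg Fin.val hab; simp only [g₂] at this; omega)
  have hgg : ∀ i j, g₁ i ≠ g₂ j := by
    intro i j he
    have := congrArg Fin.val he
    simp only [g₁, g₂] at this
    have := i.isLt
    omega
  exact ⟨XsetOf P g₁, XsetOf P g₂, anticomplete_XsetOf hmod hprop hgg,
    subdivision_XsetOf hmod hprop hc hg₁, subdivision_XsetOf hmod hprop hc hg₂⟩
end
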